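/- arXiv:1602.06318 — 4 statements merged into one kernel-verified Lean document; each statement's English description precedes it below -/
import Mathlib

section
/- Let N, K, p be positive integers with p ≥ 1 and K dividing N, and let M = N/K. For i = 1,…,K define D_i(x) = Σ_{l∈ℤ} sinc(π(i/K + l))^{p+1} · exp(−2πi·x·(i + lK)) (the series converges absolutely), Q_{p,M}(i/K) = (1/N) Σ_{m=1}^{N} |D_i(m/N)|², and ψ_i(x) = D_i(x) / Q_{p,M}(i/K)^{1/2}. Then Q_{p,M}(i/K) > 0 for every i, and for all 1 ≤ i, j ≤ K one has (1/N) Σ_{m=1}^{N} ψ_i(m/N) · conj(ψ_j(m/N)) = δ_{ij}, i.e. the functions ψ_1,…,ψ_K are orthonormal with respect to the discrete inner product at the design points m/N. -/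
open Real MeasureTheory ComplexConjugate

/-- `_root_.sinc x = sin x / x` for `x ≠ 0`, and `_root_.sinc 0 = 1`. -/
noncomputable def sinc (x : ℝ) : ℝ := if x = 0 then 1 else Real.sin x / x

/-- The `l`-th term of the _root_.sinc-series defining the (scaled) discrete Fourier transform
`D_i` of the periodic B-splines of degree `p` with `K` knots. -/
noncomputable def Dterm (K p : ℕ) (i : ℕ) (x : ℝ) (l : ℤ) : ℂ :=
  ((_root_.sinc (Real.pi * ((i : ℝ) / K + l)) ^ (p + 1) : ℝ) : ℂ) *
    Complex.exp (-2 * (Real.pi : ℂ) * Complex.I * (x : ℂ) * ((i : ℂ) + (l : ℂ) * (K : ℂ)))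

/-- `D_i(x) = Σ_{l ∈ ℤ} _root_.sinc(π(i/K + l))^{p+1} exp(−2πi x (i + lK))`. -/
noncomputable def Dfun (K p : ℕ) (i : ℕ) (x : ℝ) : ℂ := ∑' l : ℤ, Dterm K p i x l

/-- `Q_{p,M}(i/K) = (1/N) Σ_{m=1}^N |D_i(m/N)|²`. -/
noncomputable def Qdisc (N K p : ℕ) (i : ℕ) : ℝ :=
  (1 / N : ℝ) * ∑ m ∈ Finset.Icc (1 : ℕ) N, ‖Dfun K p i ((m : ℝ) / N)‖ ^ 2

/-- The Demmler–Reinsch basis function `ψ_i(x) = D_i(x)/Q_{p,M}(i/K)^{1/2}`. -/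
noncomputable def psiDR (N K p : ℕ) (i : ℕ) (x : ℝ) : ℂ :=
  Dfun K p i x / ((Real.sqrt (Qdisc N K p i) : ℝ) : ℂ)


namespace DRaux

lemma abs_sinc_le_one (x : ℝ) : |_root_.sinc x| ≤ 1 := by
  unfold _root_.sinc
  split_ifs with h
  · simp
  · rw [abs_div, div_le_one (abs_pos.mpr h)]
    exact Real.abs_sin_le_abs

lemma abs_sinc_le_inv (x : ℝ) (hx : x ≠ 0) : |_root_.sinc x| ≤ |x|⁻¹ := by
  unfold _root_.sinc
  rw [if_neg hx, abs_div, div_eq_mul_inv]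
  have h1 : |Real.sin x| ≤ 1 := Real.abs_sin_le_one x
  have h2 : (0:ℝ) ≤ |x|⁻¹ := by positivity
  calc |Real.sin x| * |x|⁻¹ ≤ 1 * |x|⁻¹ := by gcongr
    _ = |x|⁻¹ := one_mul _

lemma sinc_of_ne {x : ℝ} (hx : x ≠ 0) : _root_.sinc x = Real.sin x / x := if_neg hx

lemma Dterm_eq (K p i : ℕ) (x : ℝ) (l : ℤ) :
    Dterm K p i x l = ((_root_.sinc (π * ((i:ℝ)/K + l)) ^ (p+1) : ℝ) : ℂ) *
      Complex.exp (((-(2*π*x*((i:ℝ) + (l:ℝ)*K)) : ℝ) : ℂ) * Complex.I) := by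
  unfold Dterm
  congr 2
  push_cast
  ring

lemma norm_Dterm (K p i : ℕ) (x : ℝ) (l : ℤ) :
    ‖Dterm K p i x l‖ = |_root_.sinc (π * ((i:ℝ)/K + l))| ^ (p+1) := by
  rw [Dterm_eq, norm_mul, Complex.norm_real, Real.norm_eq_abs,
    Complex.norm_exp_ofReal_mul_I, mul_one, abs_pow]

lemma summable_core {t : ℝ} (ht0 : 0 < t) (ht1 : t ≤ 1) {q : ℕ} (hq : 2 ≤ q) :
    Summable (fun l : ℤ => |_root_.sinc (π * (t + l))| ^ q) := by
  have h1 : Summable (fun n : ℤ => 1 / (n:ℝ)^2) := summable_one_div_int_pow.mpr one_lt_two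
  have hinj : Function.Injective (fun l : ℤ => 2*l+1) := fun a b hab => by simp only at hab; omega
  have hsum : Summable (fun l : ℤ => 9 * (1 / ((2*l+1 : ℤ):ℝ) ^ 2)) :=
    (h1.comp_injective hinj).mul_left 9
  refine Summable.of_nonneg_of_le (fun l => by positivity) (fun l => ?_) hsum
  by_cases h0 : l = 0 ∨ l = -1
  · have hle : |_root_.sinc (π*(t+l))| ^ q ≤ 1 := pow_le_one₀ (abs_nonneg _) (abs_sinc_le_one _)
    have h21 : ((2*l+1 : ℤ):ℝ)^2 = 1 := by
      rcases h0 with h | h <;> subst h <;> norm_num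
    rw [h21]
    linarith
  · push_neg at h0
    obtain ⟨h0a, h0b⟩ := h0
    have hl : (1:ℤ) ≤ l ∨ l ≤ -2 := by omega
    have hl' : (1:ℝ) ≤ (l:ℝ) ∨ (l:ℝ) ≤ -2 := by
      rcases hl with h | h
      · exact Or.inl (by exact_mod_cast h)
      · exact Or.inr (by exact_mod_cast h)
    have hy : π * (t + l) ≠ 0 := by
      rcases hl' with h | h
      · have : 0 < t + l := by linarith
        positivity
      · have h2 : t + l < 0 := by linarith
        have := Real.pi_pos
        intro hc
        nlinarith
    have hπ : (3:ℝ) < π := Real.pi_gt_three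
    have key : ((2*l+1:ℤ):ℝ)^2 ≤ 9 * (π*(t+l))^2 := by
      push_cast
      rcases hl' with h | h
      · have hpos : (0:ℝ) < t + l := by linarith
        have h3 : (2*(l:ℝ)+1) ≤ π*(t+l) := by nlinarith
        have h4 : (0:ℝ) ≤ 2*(l:ℝ)+1 := by linarith
        nlinarith
      · have hpos : (0:ℝ) < -(t + l) := by linarith
        have h3 : -(2*(l:ℝ)+1) ≤ π*(-(t+l)) := by nlinarith
        have h4 : (0:ℝ) ≤ -(2*(l:ℝ)+1) := by linarith
        nlinarith
    have hA : (0:ℝ) < (π*(t+l))^2 := by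
      have := abs_pos.mpr hy
      calc (0:ℝ) < |π*(t+l)|^2 := by positivity
        _ = (π*(t+l))^2 := sq_abs _
    have hB : (0:ℝ) < ((2*l+1:ℤ):ℝ)^2 := by
      have hne : ((2*l+1:ℤ):ℝ) ≠ 0 := by
        exact_mod_cast (by omega : (2*l+1:ℤ) ≠ 0)
      calc (0:ℝ) < |((2*l+1:ℤ):ℝ)|^2 := by positivity
        _ = _ := sq_abs _
    calc |_root_.sinc (π*(t+l))| ^ q ≤ |_root_.sinc (π*(t+l))| ^ 2 :=
          pow_le_pow_of_le_one (abs_nonneg _) (abs_sinc_le_one _) hq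
      _ ≤ (|π*(t+l)|⁻¹)^2 :=
          pow_le_pow_left₀ (abs_nonneg _) (abs_sinc_le_inv _ hy) 2
      _ = 1 / (π*(t+l))^2 := by
          rw [inv_pow, sq_abs, one_div]
      _ ≤ 9 * (1 / ((2*l+1:ℤ):ℝ)^2) := by
          rw [mul_one_div, div_le_div_iff₀ hA hB]
          nlinarith

lemma summable_norm_Dterm (K p i : ℕ) (hp : 1 ≤ p) (hK : 0 < K) (hi1 : 1 ≤ i) (hiK : i ≤ K)
    (x : ℝ) : Summable (fun l : ℤ => ‖Dterm K p i x l‖) := by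
  have ht0 : (0:ℝ) < (i:ℝ)/K := by
    apply div_pos <;> [exact_mod_cast hi1; exact_mod_cast hK]
  have ht1 : (i:ℝ)/K ≤ 1 := by
    rw [div_le_one (by exact_mod_cast hK)]
    exact_mod_cast hiK
  have := summable_core ht0 ht1 (q := p+1) (by omega)
  refine this.congr fun l => ?_
  rw [norm_Dterm]


lemma tsum_sinc_pos (K p i : ℕ) (hp : 1 ≤ p) (hK : 0 < K) (hi1 : 1 ≤ i) (hiK : i ≤ K) :
    0 < ∑' l : ℤ, _root_.sinc (π * ((i:ℝ)/K + l)) ^ (p+1) := by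
  set q := p + 1 with hqdef
  have hq2 : 2 ≤ q := by omega
  have hq0 : q ≠ 0 := by omega
  set t : ℝ := (i:ℝ)/K with htdef
  have hKR : (0:ℝ) < K := by exact_mod_cast hK
  have ht0 : 0 < t := div_pos (by exact_mod_cast hi1) hKR
  have ht1 : t ≤ 1 := by rw [htdef, div_le_one hKR]; exact_mod_cast hiK
  set f : ℤ → ℝ := fun l => _root_.sinc (π * (t + l)) ^ q with hfdef
  have habs : Summable (fun l : ℤ => |f l|) := by
    refine (summable_core ht0 ht1 hq2).congr fun l => ?_
    rw [hfdef]; simp [abs_pow]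
  have hf : Summable f := habs.of_abs
  show 0 < ∑' l : ℤ, f l
  rcases eq_or_lt_of_le hiK with hieq | hilt
  · -- i = K, t = 1
    have ht : t = 1 := by rw [htdef, hieq, div_self hKR.ne']
    rw [tsum_eq_single (-1 : ℤ) ?side]
    case side =>
      intro b hb
      have hb' : (1:ℝ) + b ≠ 0 := by
        intro hc
        apply hb
        have : (b:ℝ) = ((-1:ℤ):ℝ) := by push_cast; linarith
        exact_mod_cast this
      have hy : π * (t + b) ≠ 0 := by
        rw [ht]; exact mul_ne_zero Real.pi_ne_zero hb'
      have hsin : Real.sin (π * (t + b)) = 0 := by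
        rw [ht, show π * (1 + (b:ℝ)) = ((1+b : ℤ):ℝ) * π by push_cast; ring]
        exact Real.sin_int_mul_pi _
      rw [hfdef]
      simp only
      rw [sinc_of_ne hy, hsin, zero_div, zero_pow hq0]
    · rw [hfdef]
      simp only [ht]
      norm_num
      rw [show _root_.sinc 0 = 1 from if_pos rfl, one_pow]
      norm_num
  · -- i < K, 0 < t < 1
    have ht1' : t < 1 := by
      rw [htdef, div_lt_one hKR]; exact_mod_cast hilt
    set s : ℝ := Real.sin (π * t) with hsdef
    have hs : 0 < s := by
      apply Real.sin_pos_of_pos_of_lt_pi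
      · positivity
      · nlinarith [Real.pi_pos]
    set g : ℕ → ℝ := fun n => (s / (π * (t + n))) ^ q with hgdef
    set h : ℕ → ℝ := fun n => (s / (π * ((n:ℝ) + 1 - t))) ^ q with hhdef
    have hgpos : ∀ n, 0 < g n := fun n => by
      have h1 : (0:ℝ) < t + n := by positivity
      have : (0:ℝ) < π * (t + n) := by positivity
      exact pow_pos (div_pos hs this) q
    have hhpos : ∀ n, 0 < h n := fun n => by
      have h1 : (0:ℝ) < (n:ℝ) + 1 - t := by
        have : (0:ℝ) ≤ (n:ℝ) := n.cast_nonneg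
        linarith
      have : (0:ℝ) < π * ((n:ℝ) + 1 - t) := by positivity
      exact pow_pos (div_pos hs this) q
    have hgdec : ∀ n : ℕ, g (n+1) < g n := by
      intro n
      have h1 : (0:ℝ) < π * (t + n) := by positivity
      have h2 : π * (t + (n:ℝ)) < π * (t + ((n:ℝ)+1)) := by
        have := Real.pi_pos; nlinarith
      have h3 : s / (π * (t + ((n:ℝ)+1))) < s / (π * (t + (n:ℝ))) :=
        div_lt_div_of_pos_left hs h1 h2
      have h4 : (0:ℝ) < s / (π * (t + ((n:ℝ)+1))) := by
        have : (0:ℝ) < π * (t + ((n:ℝ)+1)) := by positivity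
        positivity
      rw [hgdef]
      simp only
      push_cast
      exact pow_lt_pow_left₀ h3 h4.le hq0
    have hhdec : ∀ n : ℕ, h (n+1) < h n := by
      intro n
      have hd1 : (0:ℝ) < (n:ℝ) + 1 - t := by
        have : (0:ℝ) ≤ (n:ℝ) := n.cast_nonneg
        linarith
      have h1 : (0:ℝ) < π * ((n:ℝ) + 1 - t) := by positivity
      have h2 : π * ((n:ℝ) + 1 - t) < π * (((n:ℝ)+1) + 1 - t) := by
        have := Real.pi_pos; nlinarith
      have h3 := div_lt_div_of_pos_left hs h1 h2
      have h4 : (0:ℝ) < s / (π * (((n:ℝ)+1) + 1 - t)) := by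
        have h5 : (0:ℝ) < ((n:ℝ)+1) + 1 - t := by linarith
        have h6 : (0:ℝ) < π * (((n:ℝ)+1) + 1 - t) := by positivity
        positivity
      rw [hhdef]
      simp only
      push_cast
      exact pow_lt_pow_left₀ h3 h4.le hq0
    -- values
    have hfa : ∀ n : ℕ, f (n:ℤ) = ((-1:ℝ)^n)^q * g n := by
      intro n
      have hy0 : (0:ℝ) < t + n := by positivity
      have hy : π * (t + ((n:ℤ):ℝ)) ≠ 0 := by
        push_cast
        positivity
      have hsin : Real.sin (π * (t + ((n:ℤ):ℝ))) = (-1:ℝ)^n * s := by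
        rw [show π * (t + ((n:ℤ):ℝ)) = π * t + (n:ℕ) * π by push_cast; ring]
        rw [Real.sin_add_nat_mul_pi]
      rw [hfdef]
      simp only
      rw [sinc_of_ne hy, hsin, hgdef]
      simp only
      rw [mul_div_assoc, mul_pow]
      norm_cast
    have hfb : ∀ n : ℕ, f (-((n:ℤ)+1)) = ((-1:ℝ)^n)^q * h n := by
      intro n
      have hd1 : (0:ℝ) < (n:ℝ) + 1 - t := by
        have : (0:ℝ) ≤ (n:ℝ) := n.cast_nonneg
        linarith
      have hcast : ((-((n:ℤ)+1) : ℤ) : ℝ) = t + -((n:ℝ)+1) - t := by push_cast; ring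
      have hy : π * (t + -((n:ℝ)+1)) ≠ 0 := by
        have hneg : t + -((n:ℝ)+1) < 0 := by linarith
        intro hc
        have := Real.pi_pos
        nlinarith
      set a : ℝ := (-1:ℝ)^(n+1) with hadef
      have haa : a * a = 1 := by
        rw [hadef, ← pow_add]
        exact Even.neg_one_pow ⟨n+1, rfl⟩
      have h1 : s = a * Real.sin (π * (t + -((n:ℝ)+1))) := by
        have h2 := Real.sin_add_nat_mul_pi (π * (t + -((n:ℝ)+1))) (n+1)
        rw [show π * (t + -((n:ℝ)+1)) + ((n+1:ℕ):ℝ) * π = π * t by push_cast; ring] at h2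
        rw [hsdef, h2, hadef]
      have hX : Real.sin (π * (t + -((n:ℝ)+1))) = a * s := by
        rw [h1, ← mul_assoc, haa, one_mul]
      rw [hfdef]
      simp only
      rw [show π * (t + ((-((n:ℤ)+1) : ℤ) : ℝ)) = π * (t + -((n:ℝ)+1)) by push_cast; ring]
      rw [sinc_of_ne hy, hX, hhdef]
      simp only
      have hden2 : π * ((n:ℝ) + 1 - t) ≠ 0 := by positivity
      rw [show π * (t + -((n:ℝ)+1)) = -(π * ((n:ℝ)+1-t)) by ring]
      rw [hadef]
      rw [show ((-1:ℝ)^(n+1) * s) / -(π * ((n:ℝ)+1-t)) = (-1:ℝ)^n * (s / (π * ((n:ℝ)+1-t))) by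
        rw [pow_succ]; field_simp]
      rw [mul_pow]
    -- summability pieces
    have hfnat : Summable (fun n : ℕ => f (n:ℤ)) :=
      hf.comp_injective (fun a b hab => by simpa using hab)
    have hfneg : Summable (fun n : ℕ => f (-((n:ℤ)+1))) :=
      hf.comp_injective (fun a b hab => by simpa using hab)
    have hsplit : ∑' l : ℤ, f l = (∑' n : ℕ, f (n:ℤ)) + ∑' n : ℕ, f (-((n:ℤ)+1)) :=
      tsum_of_nat_of_neg_add_one hfnat hfneg
    set u : ℕ → ℝ := fun n => f (n:ℤ) + f (-((n:ℤ)+1)) with hudef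
    have hu : Summable u := hfnat.add hfneg
    have husum : ∑' l : ℤ, f l = ∑' n : ℕ, u n := by
      rw [hsplit, ← Summable.tsum_add hfnat hfneg]
    have huval : ∀ n, u n = ((-1:ℝ)^n)^q * (g n + h n) := fun n => by
      rw [hudef]; simp only; rw [hfa n, hfb n]; ring
    rcases Nat.even_or_odd q with hqe | hqo
    · rw [husum]
      refine Summable.tsum_pos hu (fun n => ?_) 0 ?_
      · rw [huval n, pow_right_comm, hqe.neg_one_pow, one_pow, one_mul]
        have := hgpos n; have := hhpos n; linarith
      · rw [huval 0, pow_right_comm, hqe.neg_one_pow, one_pow, one_mul]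
        have := hgpos 0; have := hhpos 0; linarith
    · rw [husum]
      have hueo : ∀ n, u n = (-1:ℝ)^n * (g n + h n) := fun n => by
        rw [huval n, pow_right_comm, hqo.neg_one_pow]
      have he : Summable (fun k : ℕ => u (2*k)) :=
        hu.comp_injective (fun a b hab => by omega)
      have ho : Summable (fun k : ℕ => u (2*k+1)) :=
        hu.comp_injective (fun a b hab => by omega)
      rw [← tsum_even_add_odd he ho, ← Summable.tsum_add he ho]
      refine Summable.tsum_pos (he.add ho) (fun k => ?_) 0 ?_
      · rw [hueo (2*k), hueo (2*k+1), Even.neg_one_pow (even_two_mul k),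
          Odd.neg_one_pow (odd_two_mul_add_one k), one_mul]
        have h1 : g (2*k+1) < g (2*k) := hgdec (2*k)
        have h2 : h (2*k+1) < h (2*k) := hhdec (2*k)
        linarith
      · rw [hueo (2*0), hueo (2*0+1), Even.neg_one_pow (even_two_mul 0),
          Odd.neg_one_pow (odd_two_mul_add_one 0), one_mul]
        have h1 : g (2*0+1) < g (2*0) := hgdec (2*0)
        have h2 : h (2*0+1) < h (2*0) := hhdec (2*0)
        linarith

lemma Dfun_one (K p i : ℕ) :
    Dfun K p i 1 = ((∑' l : ℤ, _root_.sinc (π * ((i:ℝ)/K + l)) ^ (p+1) : ℝ) : ℂ) := by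
  rw [Complex.ofReal_tsum]
  refine tsum_congr fun l => ?_
  unfold Dterm
  rw [show (-2*(π:ℂ)*Complex.I*((1:ℝ):ℂ)*((i:ℂ)+(l:ℂ)*(K:ℂ)))
      = ((-((i:ℤ) + l*(K:ℤ)) : ℤ) : ℂ) * (2*(π:ℂ)*Complex.I) by push_cast; ring]
  rw [Complex.exp_int_mul_two_pi_mul_I, mul_one]

lemma Qdisc_pos (N K p i : ℕ) (hp : 1 ≤ p) (hN : 0 < N) (hK : 0 < K)
    (hi1 : 1 ≤ i) (hiK : i ≤ K) : 0 < Qdisc N K p i := by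
  have hS := tsum_sinc_pos K p i hp hK hi1 hiK
  unfold Qdisc
  have hterm : ‖Dfun K p i ((N:ℝ)/N)‖^2
      = (∑' l : ℤ, _root_.sinc (π * ((i:ℝ)/K + l)) ^ (p+1))^2 := by
    rw [show ((N:ℝ)/N) = 1 from div_self (by positivity), Dfun_one,
      Complex.norm_real, Real.norm_eq_abs, sq_abs]
  have hmem : N ∈ Finset.Icc 1 N := by rw [Finset.mem_Icc]; omega
  have hge := Finset.single_le_sum
      (f := fun m : ℕ => ‖Dfun K p i ((m:ℝ)/N)‖^2) (fun m _ => by positivity) hmem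
  rw [hterm] at hge
  have h1 : (0:ℝ) < 1/(N:ℝ) := by positivity
  have h2 : (0:ℝ) < (∑' l : ℤ, _root_.sinc (π * ((i:ℝ)/K + l)) ^ (p+1))^2 := pow_pos hS 2
  exact mul_pos h1 (lt_of_lt_of_le h2 hge)

lemma sum_Icc_pow_eq_zero {ζ : ℂ} (N : ℕ) (h1 : ζ ≠ 1) (hζ : ζ ^ N = 1) :
    ∑ m ∈ Finset.Icc 1 N, ζ ^ m = 0 := by
  have hrange : Finset.range (N+1) = insert 0 (Finset.Icc 1 N) := by
    ext m
    simp [Nat.lt_succ_iff]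
    omega
  have hg := geom_sum_eq h1 (N+1)
  rw [hrange, Finset.sum_insert (by simp)] at hg
  rw [pow_succ, hζ, one_mul, div_self (sub_ne_zero.mpr h1)] at hg
  rw [pow_zero] at hg
  linear_combination hg

lemma zeta_ne_one (N : ℕ) (hN : 0 < N) (d : ℤ) (hd : ¬ ((N:ℤ) ∣ d)) :
    Complex.exp (((-2*π*(d:ℝ)/N : ℝ) : ℂ) * Complex.I) ≠ 1 := by
  intro h
  rw [Complex.exp_eq_one_iff] at h
  obtain ⟨n, hn⟩ := h
  have him := congrArg Complex.im hn
  simp [Complex.mul_I_im] at him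
  -- him : -2*π*d/N = n * (2*π)  (some shape)
  have hNR : ((N:ℝ)) ≠ 0 := by positivity
  have hπ := Real.pi_ne_zero
  have hdn : (d:ℝ) = -(n:ℝ) * N := by
    field_simp at him
    nlinarith [him, Real.pi_pos]
  apply hd
  refine ⟨-n, ?_⟩
  have : (d:ℝ) = ((N * -n : ℤ) : ℝ) := by push_cast; linarith [hdn]
  exact_mod_cast this

lemma zeta_pow_N (N : ℕ) (hN : 0 < N) (d : ℤ) :
    (Complex.exp (((-2*π*(d:ℝ)/N : ℝ) : ℂ) * Complex.I)) ^ N = 1 := by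
  rw [← Complex.exp_nat_mul]
  have hNC : ((N:ℂ)) ≠ 0 := by
    exact_mod_cast Nat.cast_ne_zero.mpr hN.ne'
  rw [show (N:ℂ) * (((-2*π*(d:ℝ)/N : ℝ) : ℂ) * Complex.I) = ((-d : ℤ):ℂ) * (2*(π:ℂ)*Complex.I) by
    push_cast
    field_simp]
  exact Complex.exp_int_mul_two_pi_mul_I _

lemma conj_mul_exp (r θ : ℝ) :
    conj ((r : ℂ) * Complex.exp ((θ:ℂ) * Complex.I))
      = (r : ℂ) * Complex.exp (((-θ : ℝ):ℂ) * Complex.I) := by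
  rw [map_mul, Complex.conj_ofReal, ← Complex.exp_conj]
  congr 2
  rw [map_mul, Complex.conj_ofReal, Complex.conj_I]
  push_cast
  ring

lemma Dmul_eq (N K p i j : ℕ) (hN : 0 < N) (m : ℕ) (l l' : ℤ) :
    Dterm K p i ((m:ℝ)/N) l * conj (Dterm K p j ((m:ℝ)/N) l')
      = ((_root_.sinc (π * ((i:ℝ)/K + l)) ^ (p+1) * _root_.sinc (π * ((j:ℝ)/K + l')) ^ (p+1) : ℝ) : ℂ) *
        (Complex.exp (((-2*π*(((i:ℤ) - j + (l - l')*K : ℤ):ℝ)/N : ℝ) : ℂ) * Complex.I)) ^ m := by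
  have hNR : ((N:ℝ)) ≠ 0 := by positivity
  rw [Dterm_eq, Dterm_eq, conj_mul_exp]
  rw [mul_mul_mul_comm, ← Complex.exp_add, ← Complex.exp_nat_mul]
  have hNC : ((N:ℂ)) ≠ 0 := by exact_mod_cast Nat.cast_ne_zero.mpr hN.ne'
  congr 1
  · push_cast; ring
  · congr 1
    push_cast
    field_simp
    ring

lemma inner_sum_zero (N K p i j : ℕ) (hN : 0 < N) (l l' : ℤ)
    (hd : ¬ ((N:ℤ) ∣ ((i:ℤ) - j + (l - l')*K))) :
    ∑ m ∈ Finset.Icc 1 N, Dterm K p i ((m:ℝ)/N) l * conj (Dterm K p j ((m:ℝ)/N) l') = 0 := by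
  have hz := fun m => Dmul_eq N K p i j hN m l l'
  rw [Finset.sum_congr rfl (fun m _ => hz m), ← Finset.mul_sum]
  rw [sum_Icc_pow_eq_zero N (zeta_ne_one N hN _ hd) (zeta_pow_N N hN _), mul_zero]

lemma not_dvd (N K i j : ℕ) (hN : 0 < N) (hK : 0 < K) (hKN : K ∣ N)
    (hi1 : 1 ≤ i) (hiK : i ≤ K) (hj1 : 1 ≤ j) (hjK : j ≤ K) (hij : i ≠ j) (l l' : ℤ) :
    ¬ ((N:ℤ) ∣ ((i:ℤ) - j + (l - l')*K)) := by
  intro hdvd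
  have hKN' : (K:ℤ) ∣ (N:ℤ) := Int.natCast_dvd_natCast.mpr hKN
  have h1 : (K:ℤ) ∣ ((i:ℤ) - j + (l - l')*K) := dvd_trans hKN' hdvd
  have h2 : (K:ℤ) ∣ ((l - l')*K) := ⟨l - l', by ring⟩
  have h3 : (K:ℤ) ∣ ((i:ℤ) - j) := by
    have := dvd_sub h1 h2
    simpa using this
  obtain ⟨e, he⟩ := h3
  have hb1 : (1:ℤ) ≤ (i:ℤ) := by exact_mod_cast hi1
  have hb2 : (i:ℤ) ≤ K := by exact_mod_cast hiK
  have hb3 : (1:ℤ) ≤ (j:ℤ) := by exact_mod_cast hj1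
  have hb4 : (j:ℤ) ≤ K := by exact_mod_cast hjK
  have hKZ : (0:ℤ) < K := by exact_mod_cast hK
  have hijZ : (i:ℤ) ≠ j := fun hc => hij (by exact_mod_cast hc)
  have habs : |(i:ℤ) - (j:ℤ)| < K := by rw [abs_lt]; constructor <;> omega
  rw [he, abs_mul, abs_of_pos hKZ] at habs
  have he1 : |e| < 1 := lt_of_mul_lt_mul_left (by linarith [habs]) (le_of_lt hKZ)
  have he0 : e = 0 := Int.abs_lt_one_iff.mp he1
  rw [he0, mul_zero] at he
  omega

set_option maxHeartbeats 1000000 in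
lemma sum_DD_zero (N K p i j : ℕ) (hp : 1 ≤ p) (hN : 0 < N) (hK : 0 < K) (hKN : K ∣ N)
    (hi1 : 1 ≤ i) (hiK : i ≤ K) (hj1 : 1 ≤ j) (hjK : j ≤ K) (hij : i ≠ j) :
    ∑ m ∈ Finset.Icc 1 N, Dfun K p i ((m:ℝ)/N) * conj (Dfun K p j ((m:ℝ)/N)) = 0 := by
  have hfi : ∀ x : ℝ, Summable (fun l : ℤ => ‖Dterm K p i x l‖) :=
    summable_norm_Dterm K p i hp hK hi1 hiK
  have hfj : ∀ x : ℝ, Summable (fun l : ℤ => ‖Dterm K p j x l‖) :=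
    summable_norm_Dterm K p j hp hK hj1 hjK
  have hfjc : ∀ x : ℝ, Summable (fun l : ℤ => ‖conj (Dterm K p j x l)‖) := fun x =>
    (hfj x).congr fun l => (norm_star _).symm
  have hprod : ∀ m : ℕ, Dfun K p i ((m:ℝ)/N) * conj (Dfun K p j ((m:ℝ)/N))
      = ∑' z : ℤ × ℤ, Dterm K p i ((m:ℝ)/N) z.1 * conj (Dterm K p j ((m:ℝ)/N) z.2) := by
    intro m
    have hconj : conj (Dfun K p j ((m:ℝ)/N)) = ∑' l : ℤ, conj (Dterm K p j ((m:ℝ)/N) l) := by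
      unfold Dfun
      simp only [starRingEnd_apply]
      exact tsum_star
    rw [hconj]
    unfold Dfun
    exact tsum_mul_tsum_of_summable_norm
      (f := fun l : ℤ => Dterm K p i ((m:ℝ)/N) l)
      (g := fun l : ℤ => conj (Dterm K p j ((m:ℝ)/N) l)) (hfi _) (hfjc _)
  refine Eq.trans (Finset.sum_congr rfl fun m _ => hprod m) ?_
  have hsummable : ∀ m ∈ Finset.Icc 1 N, Summable
      (fun z : ℤ × ℤ => Dterm K p i ((m:ℝ)/N) z.1 * conj (Dterm K p j ((m:ℝ)/N) z.2)) :=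
    fun m _ => summable_mul_of_summable_norm
      (f := fun l : ℤ => Dterm K p i ((m:ℝ)/N) l)
      (g := fun l : ℤ => conj (Dterm K p j ((m:ℝ)/N) l)) (hfi _) (hfjc _)
  rw [← Summable.tsum_finsetSum hsummable]
  have hz : ∀ z : ℤ × ℤ, ∑ m ∈ Finset.Icc 1 N,
      Dterm K p i ((m:ℝ)/N) z.1 * conj (Dterm K p j ((m:ℝ)/N) z.2) = 0 := fun z =>
    inner_sum_zero N K p i j hN z.1 z.2
      (not_dvd N K i j hN hK hKN hi1 hiK hj1 hjK hij z.1 z.2)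
  rw [tsum_congr hz, tsum_zero]

end DRaux

theorem stmt0 (N K p : ℕ) (hp : 1 ≤ p) (hN : 0 < N) (hK : 0 < K) (hKN : K ∣ N) :
    (∀ i x, 1 ≤ i → i ≤ K → Summable (fun l : ℤ => ‖Dterm K p i x l‖)) ∧
    (∀ i, 1 ≤ i → i ≤ K → 0 < Qdisc N K p i) ∧
    (∀ i j, 1 ≤ i → i ≤ K → 1 ≤ j → j ≤ K →
      (1 / N : ℂ) * ∑ m ∈ Finset.Icc (1 : ℕ) N,
          psiDR N K p i ((m : ℝ) / N) * conj (psiDR N K p j ((m : ℝ) / N)) =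
        if i = j then 1 else 0) := by
  refine ⟨fun i x hi1 hiK => DRaux.summable_norm_Dterm K p i hp hK hi1 hiK x,
          fun i hi1 hiK => DRaux.Qdisc_pos N K p i hp hN hK hi1 hiK,
          fun i j hi1 hiK hj1 hjK => ?_⟩
  have hNR : ((N:ℝ)) ≠ 0 := by positivity
  have hNC : ((N:ℂ)) ≠ 0 := by exact_mod_cast Nat.cast_ne_zero.mpr hN.ne'
  by_cases hij : i = j
  · subst hij
    rw [if_pos rfl]
    have hQ : 0 < Qdisc N K p i := DRaux.Qdisc_pos N K p i hp hN hK hi1 hiK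
    have hterm : ∀ m : ℕ, psiDR N K p i ((m:ℝ)/N) * conj (psiDR N K p i ((m:ℝ)/N))
        = ((‖Dfun K p i ((m:ℝ)/N)‖^2 / Qdisc N K p i : ℝ) : ℂ) := by
      intro m
      unfold psiDR
      rw [map_div₀, Complex.conj_ofReal, div_mul_div_comm, Complex.mul_conj,
        ← Complex.ofReal_mul, Real.mul_self_sqrt hQ.le,
        Complex.normSq_eq_norm_sq, Complex.ofReal_div]
    rw [Finset.sum_congr rfl (fun m _ => hterm m), ← Complex.ofReal_sum, ← Finset.sum_div]
    have hsum : ∑ m ∈ Finset.Icc 1 N, ‖Dfun K p i ((m:ℝ)/N)‖^2 = N * Qdisc N K p i := by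
      have hq : Qdisc N K p i
          = (1/(N:ℝ)) * ∑ m ∈ Finset.Icc 1 N, ‖Dfun K p i ((m:ℝ)/N)‖^2 := rfl
      rw [hq]
      field_simp
    rw [hsum, mul_div_assoc, div_self hQ.ne', mul_one]
    push_cast
    field_simp
  · rw [if_neg hij]
    have hDD := DRaux.sum_DD_zero N K p i j hp hN hK hKN hi1 hiK hj1 hjK hij
    have hterm : ∀ m : ℕ, psiDR N K p i ((m:ℝ)/N) * conj (psiDR N K p j ((m:ℝ)/N))
        = (Dfun K p i ((m:ℝ)/N) * conj (Dfun K p j ((m:ℝ)/N))) /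
          (((Real.sqrt (Qdisc N K p i) : ℝ):ℂ) * ((Real.sqrt (Qdisc N K p j) : ℝ):ℂ)) := by
      intro m
      unfold psiDR
      rw [map_div₀, Complex.conj_ofReal, div_mul_div_comm]
    rw [Finset.sum_congr rfl (fun m _ => hterm m), ← Finset.sum_div, hDD, zero_div, mul_zero]
end

section
/- Let p ≥ 1 and K ≥ 1 be integers. For 1 ≤ i ≤ K define D_i(x) = Σ_{l∈ℤ} sinc(π(i/K + l))^{p+1} exp(−2πi·x·(i + lK)), Q_{2p}(z) = Σ_{l∈ℤ} sinc(π(z + l))^{2p+2}, and φ_i(x) = D_i(x)/Q_{2p}(i/K)^{1/2}. Then for all 1 ≤ i, j ≤ K, ∫_0^1 φ_i(x) · conj(φ_j(x)) dx = δ_{ij}. -/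
open Real MeasureTheory ComplexConjugate

/-- `Q_n(z) = Σ_{l ∈ ℤ} sinc(π(z+l))^n` (here `n` is the power, so `Q_{2p}` of the
paper is `Qs (2*p+2)`). -/
noncomputable def Qs (n : ℕ) (z : ℝ) : ℝ := ∑' l : ℤ, _root_.sinc (Real.pi * (z + l)) ^ n

/-- The L²-orthonormal Demmler–Reinsch basis function
`φ_i(x) = D_i(x)/Q_{2p}(i/K)^{1/2}`. -/
noncomputable def phiDR (K p : ℕ) (i : ℕ) (x : ℝ) : ℂ :=
  Dfun K p i x / ((Real.sqrt (Qs (2 * p + 2) ((i : ℝ) / K)) : ℝ) : ℂ)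

lemma abs_sinc_le_one (x : ℝ) : |_root_.sinc x| ≤ 1 := by
  unfold _root_.sinc
  split_ifs with h
  · norm_num
  · rw [abs_div, div_le_one (abs_pos.mpr h)]
    exact Real.abs_sin_le_abs

lemma abs_sinc_le_inv (x : ℝ) (hx : x ≠ 0) : |_root_.sinc x| ≤ |x|⁻¹ := by
  unfold _root_.sinc
  rw [if_neg hx, abs_div, ← one_div, div_le_div_iff₀ (abs_pos.mpr hx) (abs_pos.mpr hx)]
  have h1 : |Real.sin x| ≤ 1 := abs_le.mpr ⟨Real.neg_one_le_sin x, Real.sin_le_one x⟩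
  nlinarith [abs_pos.mpr hx]

lemma summable_abs_sinc_pow {x : ℝ} (hx : |x| ≤ 1) {n : ℕ} (hn : 2 ≤ n) :
    Summable fun l : ℤ => |_root_.sinc (Real.pi * (x + l))| ^ n := by
  have hg : Summable fun l : ℤ => 4 * (1 / (l : ℝ) ^ 2) :=
    (summable_one_div_int_pow.mpr one_lt_two).mul_left 4
  apply hg.of_norm_bounded_eventually
  rw [Filter.eventually_cofinite]
  apply Set.Finite.subset (Set.finite_Icc (-1 : ℤ) 1)
  intro l hl
  simp only [Set.mem_setOf_eq] at hl
  by_contra hmem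
  apply hl
  have h2 : (2 : ℝ) ≤ |(l : ℝ)| := by
    have : 2 ≤ |l| := by
      simp only [Set.mem_Icc, not_and, not_le] at hmem
      rcases le_or_gt 0 l with h | h
      · rw [abs_of_nonneg h]
        by_contra hcon
        exact absurd (hmem (by omega)) (by omega)
      · rw [abs_of_neg h]
        by_contra hcon
        exact absurd (hmem (by omega)) (by omega)
    calc (2:ℝ) = ((2:ℤ):ℝ) := by norm_num
    _ ≤ ((|l|:ℤ):ℝ) := by exact_mod_cast this
    _ = |(l:ℝ)| := by push_cast; rfl
  have hl0 : (0:ℝ) < |(l:ℝ)| := by linarith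
  have hxl : |(l:ℝ)| / 2 ≤ |x + (l:ℝ)| := by
    have h3 : |(l:ℝ)| ≤ |x + l| + |x| := by
      have h4 := abs_add_le (x + (l:ℝ)) (-x)
      rw [show x + (l:ℝ) + -x = (l:ℝ) by ring, abs_neg] at h4
      exact h4
    linarith [abs_nonneg x]
  have hxl0 : (0:ℝ) < |x + (l:ℝ)| := by linarith
  have harg : Real.pi * (x + l) ≠ 0 := by
    apply mul_ne_zero Real.pi_ne_zero
    intro h0; rw [h0, abs_zero] at hxl0; exact lt_irrefl _ hxl0
  have hbound : |_root_.sinc (Real.pi * (x + l))| ≤ 2 / |(l:ℝ)| := by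
    calc |_root_.sinc (Real.pi * (x + l))| ≤ |Real.pi * (x + l)|⁻¹ := abs_sinc_le_inv _ harg
    _ ≤ (|(l:ℝ)| / 2)⁻¹ := by
        apply inv_anti₀ (by linarith)
        rw [abs_mul, abs_of_pos Real.pi_pos]
        calc |(l:ℝ)|/2 ≤ |x + (l:ℝ)| := hxl
        _ = 1 * |x + (l:ℝ)| := (one_mul _).symm
        _ ≤ Real.pi * |x + (l:ℝ)| := by
            apply mul_le_mul_of_nonneg_right _ (abs_nonneg _)
            linarith [Real.pi_gt_three]
    _ = 2 / |(l:ℝ)| := by rw [inv_div]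
  rw [Real.norm_eq_abs, abs_pow, abs_abs]
  calc |_root_.sinc (Real.pi * (x + l))| ^ n ≤ |_root_.sinc (Real.pi * (x + l))| ^ 2 :=
        pow_le_pow_of_le_one (abs_nonneg _) (_root_.abs_sinc_le_one _) hn
  _ ≤ (2 / |(l:ℝ)|) ^ 2 := pow_le_pow_left₀ (abs_nonneg _) hbound 2
  _ = 4 * (1 / (l:ℝ) ^ 2) := by rw [div_pow, sq_abs]; ring

lemma sinc_pos {x : ℝ} (h0 : 0 < x) (hpi : x < Real.pi) : 0 < _root_.sinc x := by
  unfold _root_.sinc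
  rw [if_neg h0.ne']
  exact div_pos (Real.sin_pos_of_pos_of_lt_pi h0 hpi) h0

lemma Qs_pos {K i p : ℕ} (hK : 1 ≤ K) (hi1 : 1 ≤ i) (hiK : i ≤ K) :
    0 < Qs (2 * p + 2) ((i : ℝ) / K) := by
  have hK0 : (0:ℝ) < K := by exact_mod_cast hK
  have hx0 : 0 < (i:ℝ)/K := by
    apply div_pos _ hK0; exact_mod_cast hi1
  have hx1 : (i:ℝ)/K ≤ 1 := by
    rw [div_le_one hK0]; exact_mod_cast hiK
  have habs : |(i:ℝ)/K| ≤ 1 := by rw [abs_of_pos hx0]; exact hx1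
  have heven : Even (2 * p + 2) := by exact ⟨p + 1, by ring⟩
  have hsummable : Summable fun l : ℤ => _root_.sinc (Real.pi * ((i:ℝ)/K + l)) ^ (2*p+2) :=
    (summable_abs_sinc_pow habs (by omega)).congr fun l => heven.pow_abs _
  have hnonneg : ∀ l : ℤ, 0 ≤ _root_.sinc (Real.pi * ((i:ℝ)/K + l)) ^ (2*p+2) := fun l =>
    heven.pow_nonneg _
  unfold Qs
  rcases eq_or_lt_of_le hiK with heq | hlt
  · refine Summable.tsum_pos hsummable hnonneg (-1) ?_
    have : (i:ℝ)/K + (-1 : ℤ) = 0 := by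
      subst heq; push_cast; field_simp; norm_num
    rw [this, mul_zero]
    have : _root_.sinc 0 = 1 := if_pos rfl
    rw [this]; norm_num
  · refine Summable.tsum_pos hsummable hnonneg 0 ?_
    have hlt' : (i:ℝ)/K < 1 := by
      rw [div_lt_one hK0]; exact_mod_cast hlt
    have : 0 < _root_.sinc (Real.pi * ((i:ℝ)/K + (0:ℤ))) := by
      push_cast
      rw [add_zero]
      exact sinc_pos (by positivity) (by nlinarith [Real.pi_pos])
    positivity

lemma norm_Dterm (K p i : ℕ) (x : ℝ) (l : ℤ) :
    ‖Dterm K p i x l‖ = |_root_.sinc (Real.pi * ((i:ℝ)/K + l))| ^ (p+1) := by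
  unfold Dterm
  rw [norm_mul, Complex.norm_real, Real.norm_eq_abs, abs_pow]
  have h : (-2 * (Real.pi:ℂ) * Complex.I * (x:ℂ) * ((i:ℂ) + (l:ℂ) * (K:ℂ))) =
      ((-2 * Real.pi * x * ((i:ℝ) + (l:ℝ) * (K:ℝ)) : ℝ) : ℂ) * Complex.I := by
    push_cast; ring
  rw [h, Complex.norm_exp_ofReal_mul_I, mul_one]

lemma summable_norm_Dterm {K i : ℕ} (p : ℕ) (hK : 1 ≤ K) (hiK : i ≤ K) (hp : 1 ≤ p) (x : ℝ) :
    Summable fun l : ℤ => ‖Dterm K p i x l‖ := by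
  have hK0 : (0:ℝ) < K := by exact_mod_cast hK
  have habs : |(i:ℝ)/K| ≤ 1 := by
    rw [abs_of_nonneg (by positivity), div_le_one hK0]; exact_mod_cast hiK
  simp only [norm_Dterm]
  exact summable_abs_sinc_pow habs (by omega)

lemma continuous_Dterm (K p i : ℕ) (l : ℤ) : Continuous fun x : ℝ => Dterm K p i x l := by
  unfold Dterm
  fun_prop

lemma Dterm_mul_conj (K p i j : ℕ) (x : ℝ) (l l' : ℤ) :
    Dterm K p i x l * conj (Dterm K p j x l') =
      ((_root_.sinc (Real.pi * ((i:ℝ)/K + l)) ^ (p+1) * _root_.sinc (Real.pi * ((j:ℝ)/K + l')) ^ (p+1) : ℝ) : ℂ) *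
        Complex.exp (-2 * (Real.pi:ℂ) * Complex.I * (x:ℂ) *
          (((((i:ℤ) + l * K) - ((j:ℤ) + l' * K)) : ℤ) : ℂ)) := by
  unfold Dterm
  rw [map_mul, Complex.conj_ofReal, ← Complex.exp_conj]
  have hconj : conj (-2 * (Real.pi:ℂ) * Complex.I * (x:ℂ) * ((j:ℂ) + (l':ℂ) * (K:ℂ))) =
      2 * (Real.pi:ℂ) * Complex.I * (x:ℂ) * ((j:ℂ) + (l':ℂ) * (K:ℂ)) := by
    simp only [map_mul, map_add, map_neg, map_ofNat, Complex.conj_I, Complex.conj_ofReal,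
      map_natCast, map_intCast]
    ring
  rw [hconj, mul_mul_mul_comm, ← Complex.exp_add, Complex.ofReal_mul]
  congr 1
  push_cast
  ring

lemma integral_exp_int (m : ℤ) :
    (∫ x in (0:ℝ)..1, Complex.exp (-2 * (Real.pi:ℂ) * Complex.I * (x:ℂ) * (m:ℂ))) =
      if m = 0 then 1 else 0 := by
  split_ifs with hm
  · subst hm; simp
  · have hc : (-2 * (Real.pi:ℂ) * Complex.I * (m:ℂ)) ≠ 0 := by
      apply mul_ne_zero (mul_ne_zero (mul_ne_zero (by norm_num) _) Complex.I_ne_zero)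
      · exact_mod_cast Int.cast_ne_zero.mpr hm
      · exact Complex.ofReal_ne_zero.mpr Real.pi_ne_zero
    have hx : ∀ x : ℝ, -2 * (Real.pi:ℂ) * Complex.I * (x:ℂ) * (m:ℂ) =
        (-2 * (Real.pi:ℂ) * Complex.I * (m:ℂ)) * (x:ℂ) := fun x => by ring
    simp only [hx]
    rw [integral_exp_mul_complex hc]
    have h1 : Complex.exp ((-2 * (Real.pi:ℂ) * Complex.I * (m:ℂ)) * (1:ℝ)) = 1 := by
      rw [show ((-2 * (Real.pi:ℂ) * Complex.I * (m:ℂ)) * ((1:ℝ):ℂ)) =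
          (((-m : ℤ)):ℂ) * (2 * (Real.pi:ℂ) * Complex.I) by push_cast; ring]
      exact Complex.exp_int_mul_two_pi_mul_I (-m)
    have h0 : Complex.exp ((-2 * (Real.pi:ℂ) * Complex.I * (m:ℂ)) * ((0:ℝ):ℂ)) = 1 := by
      norm_num
    rw [h1, h0, sub_self, zero_div]


set_option maxHeartbeats 1000000 in
lemma key_integral (p K : ℕ) (hp : 1 ≤ p) (hK : 1 ≤ K) (i j : ℕ)
    (hi1 : 1 ≤ i) (hiK : i ≤ K) (hj1 : 1 ≤ j) (hjK : j ≤ K) :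
    (∫ x in (0:ℝ)..1, Dfun K p i x * conj (Dfun K p j x)) =
      if i = j then ((Qs (2*p+2) ((i:ℝ)/K) : ℝ) : ℂ) else 0 := by
  have hsumi : ∀ x : ℝ, Summable fun l : ℤ => ‖Dterm K p i x l‖ :=
    fun x => summable_norm_Dterm p hK hiK hp x
  have hsumj : ∀ x : ℝ, Summable fun l : ℤ => ‖Dterm K p j x l‖ :=
    fun x => summable_norm_Dterm p hK hjK hp x
  have hpoint : ∀ x : ℝ, Dfun K p i x * conj (Dfun K p j x)
      = ∑' q : ℤ × ℤ, Dterm K p i x q.1 * conj (Dterm K p j x q.2) := by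
    intro x
    unfold Dfun
    rw [Complex.conj_tsum]
    exact tsum_mul_tsum_of_summable_norm (hsumi x)
      ((hsumj x).congr fun l => (RCLike.norm_conj _).symm)
  have hint : ∀ q : ℤ × ℤ, IntegrableOn
      (fun x : ℝ => Dterm K p i x q.1 * conj (Dterm K p j x q.2)) (Set.Ioc 0 1) := by
    intro q
    exact ((continuous_Dterm K p i q.1).mul
      (continuous_star.comp (continuous_Dterm K p j q.2))).integrableOn_Ioc
  have hnorm : ∀ (q : ℤ × ℤ) (x : ℝ), ‖Dterm K p i x q.1 * conj (Dterm K p j x q.2)‖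
      = |_root_.sinc (Real.pi * ((i:ℝ)/K + q.1))| ^ (p+1)
        * |_root_.sinc (Real.pi * ((j:ℝ)/K + q.2))| ^ (p+1) := by
    intro q x
    rw [norm_mul, RCLike.norm_conj, norm_Dterm, norm_Dterm]
  have hsum : Summable fun q : ℤ × ℤ =>
      ∫ x in Set.Ioc (0:ℝ) 1, ‖Dterm K p i x q.1 * conj (Dterm K p j x q.2)‖ := by
    have heq : ∀ q : ℤ × ℤ, (∫ x in Set.Ioc (0:ℝ) 1,
        ‖Dterm K p i x q.1 * conj (Dterm K p j x q.2)‖)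
        = |_root_.sinc (Real.pi * ((i:ℝ)/K + q.1))| ^ (p+1)
          * |_root_.sinc (Real.pi * ((j:ℝ)/K + q.2))| ^ (p+1) := by
      intro q
      simp only [hnorm]
      rw [MeasureTheory.setIntegral_const]
      simp [Real.volume_Ioc]
    refine Summable.congr ?_ (fun q => (heq q).symm)
    refine Summable.mul_of_nonneg
      (f := fun l : ℤ => |_root_.sinc (Real.pi * ((i:ℝ)/K + l))| ^ (p+1))
      (g := fun l : ℤ => |_root_.sinc (Real.pi * ((j:ℝ)/K + l))| ^ (p+1)) ?_ ?_ ?_ ?_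
    · exact (hsumi 0).congr fun l => norm_Dterm K p i 0 l
    · exact (hsumj 0).congr fun l => norm_Dterm K p j 0 l
    · intro l; positivity
    · intro l; positivity
  have hswap : (∫ x in (0:ℝ)..1, Dfun K p i x * conj (Dfun K p j x))
      = ∑' q : ℤ×ℤ, ∫ x in Set.Ioc (0:ℝ) 1,
          Dterm K p i x q.1 * conj (Dterm K p j x q.2) := by
    rw [intervalIntegral.integral_of_le zero_le_one]
    simp only [hpoint]
    exact (MeasureTheory.integral_tsum_of_summable_integral_norm hint hsum).symm
  rw [hswap]
  have heval : ∀ q : ℤ×ℤ, (∫ x in Set.Ioc (0:ℝ) 1,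
        Dterm K p i x q.1 * conj (Dterm K p j x q.2))
      = ((_root_.sinc (Real.pi * ((i:ℝ)/K + q.1)) ^ (p+1)
          * _root_.sinc (Real.pi * ((j:ℝ)/K + q.2)) ^ (p+1) : ℝ) : ℂ)
        * (if ((i:ℤ) + q.1 * K) - ((j:ℤ) + q.2 * K) = 0 then 1 else 0) := by
    intro q
    rw [← intervalIntegral.integral_of_le zero_le_one]
    simp only [Dterm_mul_conj]
    rw [intervalIntegral.integral_const_mul, integral_exp_int]
  rw [tsum_congr heval]
  have hK' : (1:ℤ) ≤ K := by exact_mod_cast hK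
  by_cases hij : i = j
  · subst hij
    rw [if_pos rfl]
    have hterm : ∀ q : ℤ×ℤ,
        ((_root_.sinc (Real.pi * ((i:ℝ)/K + q.1)) ^ (p+1)
          * _root_.sinc (Real.pi * ((i:ℝ)/K + q.2)) ^ (p+1) : ℝ) : ℂ)
          * (if ((i:ℤ) + q.1 * K) - ((i:ℤ) + q.2 * K) = 0 then 1 else 0)
        = if q.1 = q.2 then ((_root_.sinc (Real.pi * ((i:ℝ)/K + q.1)) ^ (2*p+2) : ℝ) : ℂ) else 0 := by
      rintro ⟨l, l'⟩
      by_cases h : l = l'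
      · subst h
        rw [if_pos (by ring), if_pos rfl, mul_one]
        norm_cast
        rw [← pow_add]
        congr 1
        omega
      · have hcond : ¬ ((i:ℤ) + l * K - ((i:ℤ) + l' * K) = 0) := by
          intro hcon
          apply h
          have h2 : l * K = l' * K := by omega
          have hK0 : (K:ℤ) ≠ 0 := by omega
          exact mul_right_cancel₀ hK0 h2
        rw [if_neg hcond, if_neg h, mul_zero]
    rw [tsum_congr hterm]
    have hinj : Function.Injective (fun l : ℤ => ((l, l) : ℤ × ℤ)) := by
      intro a b h
      simpa using congrArg Prod.fst h
    have hsupp : Function.support (fun q : ℤ×ℤ =>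
        if q.1 = q.2 then ((_root_.sinc (Real.pi * ((i:ℝ)/K + q.1)) ^ (2*p+2) : ℝ) : ℂ) else 0)
        ⊆ Set.range (fun l : ℤ => ((l, l) : ℤ × ℤ)) := by
      intro q hq
      by_cases h : q.1 = q.2
      · exact ⟨q.1, by rw [Prod.ext_iff]; exact ⟨rfl, h⟩⟩
      · exact absurd (if_neg h) hq
    rw [← Function.Injective.tsum_eq hinj hsupp]
    rw [show Qs (2*p+2) ((i:ℝ)/K) = ∑' l : ℤ, _root_.sinc (Real.pi * ((i:ℝ)/K + l)) ^ (2*p+2) from rfl,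
      Complex.ofReal_tsum]
    exact tsum_congr fun l => by simp
  · rw [if_neg hij]
    have hz : ∀ q : ℤ×ℤ,
        ((_root_.sinc (Real.pi * ((i:ℝ)/K + q.1)) ^ (p+1)
          * _root_.sinc (Real.pi * ((j:ℝ)/K + q.2)) ^ (p+1) : ℝ) : ℂ)
          * (if ((i:ℤ) + q.1 * K) - ((j:ℤ) + q.2 * K) = 0 then 1 else 0) = 0 := by
      rintro ⟨l, l'⟩
      rw [if_neg, mul_zero]
      intro h
      apply hij
      have hij' : (i:ℤ) - j = (l' - l) * K := by linear_combination h
      have hiZ : (1:ℤ) ≤ (i:ℤ) ∧ (i:ℤ) ≤ K := ⟨by exact_mod_cast hi1, by exact_mod_cast hiK⟩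
      have hjZ : (1:ℤ) ≤ (j:ℤ) ∧ (j:ℤ) ≤ K := ⟨by exact_mod_cast hj1, by exact_mod_cast hjK⟩
      have hd : l' - l = 0 := by
        rcases lt_trichotomy (l' - l) 0 with hd0 | hd0 | hd0
        · have h1 : l' - l ≤ -1 := by omega
          have h2 : (l' - l) * K ≤ -1 * K := mul_le_mul_of_nonneg_right h1 (by omega)
          have h3 : (i:ℤ) - j ≤ -K := by rw [hij']; linarith
          exfalso; omega
        · exact hd0
        · have h1 : 1 ≤ l' - l := by omega
          have h2 : 1 * K ≤ (l' - l) * K := mul_le_mul_of_nonneg_right h1 (by omega)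
          have h3 : (K:ℤ) ≤ (i:ℤ) - j := by rw [hij']; linarith
          exfalso; omega
      rw [hd, zero_mul] at hij'
      exact_mod_cast (by omega : (i:ℤ) = j)
    rw [tsum_congr hz, tsum_zero]

theorem stmt3 (p K : ℕ) (hp : 1 ≤ p) (hK : 1 ≤ K) :
    ∀ i j, 1 ≤ i → i ≤ K → 1 ≤ j → j ≤ K →
      (∫ x in (0:ℝ)..1, phiDR K p i x * conj (phiDR K p j x)) =
        if i = j then 1 else 0 := by
  intro i j hi1 hiK hj1 hjK
  have hQip : 0 < Qs (2*p+2) ((i:ℝ)/K) := Qs_pos hK hi1 hiK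
  have hQjp : 0 < Qs (2*p+2) ((j:ℝ)/K) := Qs_pos hK hj1 hjK
  have hphi : ∀ x : ℝ, phiDR K p i x * conj (phiDR K p j x)
      = (Dfun K p i x * conj (Dfun K p j x)) /
        ((Real.sqrt (Qs (2*p+2) ((i:ℝ)/K)) * Real.sqrt (Qs (2*p+2) ((j:ℝ)/K)) : ℝ) : ℂ) := by
    intro x
    unfold phiDR
    rw [map_div₀, Complex.conj_ofReal, Complex.ofReal_mul, div_mul_div_comm]
  simp only [hphi]
  rw [intervalIntegral.integral_div, key_integral p K hp hK i j hi1 hiK hj1 hjK]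
  by_cases hij : i = j
  · subst hij
    rw [if_pos rfl, if_pos rfl, Real.mul_self_sqrt hQip.le]
    exact div_self (Complex.ofReal_ne_zero.mpr hQip.ne')
  · rw [if_neg hij, if_neg hij, zero_div]
end

section
/- Let p, q, K be integers with 1 ≤ q ≤ p and K ≥ 1. For 1 ≤ i ≤ K define D_i(x) = Σ_{l∈ℤ} sinc(π(i/K + l))^{p+1} exp(−2πi·x·(i + lK)), Q_{2p}(z) = Σ_{l∈ℤ} sinc(π(z + l))^{2p+2}, Q_{2p−2q}(z) = Σ_{l∈ℤ} sinc(π(z + l))^{2p−2q+2}, and φ_i(x) = D_i(x)/Q_{2p}(i/K)^{1/2}. Then for all 1 ≤ i, j ≤ K, ∫_0^1 φ_i^{(q)}(x) · conj(φ_j^{(q)}(x)) dx = μ_i δ_{ij}, where μ_i = (2πi)^{2q} · sinc(πi/K)^{2q} · Q_{2p−2q}(i/K) / Q_{2p}(i/K) (in μ_i, the factor (2πi)^{2q} uses the integer index i, not the imaginary unit). -/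
open Real MeasureTheory ComplexConjugate

/-- The eigenvalue `μ_i = (2πi)^{2q} _root_.sinc(πi/K)^{2q} Q_{2p−2q}(i/K)/Q_{2p}(i/K)`. -/
noncomputable def muDR (K p q : ℕ) (i : ℕ) : ℝ :=
  (2 * Real.pi * i) ^ (2 * q) * _root_.sinc (Real.pi * i / K) ^ (2 * q) *
    Qs (2 * p - 2 * q + 2) ((i : ℝ) / K) / Qs (2 * p + 2) ((i : ℝ) / K)

/-! ### Auxiliary lemmas on `_root_.sinc` -/

lemma sinc_zero : _root_.sinc 0 = 1 := if_pos rfl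

lemma sinc_mul (x : ℝ) : _root_.sinc x * x = Real.sin x := by
  unfold _root_.sinc
  rcases eq_or_ne x 0 with rfl | hx
  · simp
  · rw [if_neg hx, div_mul_cancel₀ _ hx]

lemma sinc_int_zero (n : ℤ) (hn : n ≠ 0) : _root_.sinc (π * n) = 0 := by
  unfold _root_.sinc
  rw [if_neg (by
    simp only [mul_eq_zero, Real.pi_ne_zero, false_or]
    exact_mod_cast hn)]
  rw [mul_comm, Real.sin_int_mul_pi, zero_div]

lemma summable_int_decay : Summable (fun l : ℤ => ((1:ℝ) + |(l:ℝ)|)⁻¹ ^ 2) := by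
  have hnat : Summable (fun n : ℕ => ((1:ℝ)+n)⁻¹^2) := by
    have := (summable_nat_add_iff 1).2 (Real.summable_one_div_nat_pow.2 (le_refl 2))
    refine this.congr fun n => ?_
    rw [one_div, ← inv_pow]
    norm_num [add_comm]
  refine Summable.of_nat_of_neg (hnat.congr fun n => by norm_num) (hnat.congr fun n => by norm_num)

lemma summable_sinc_pow (z : ℝ) (hz0 : 0 < z) (hz1 : z ≤ 1) (P t : ℕ) (h : t + 2 ≤ P) :
    Summable (fun l : ℤ => |_root_.sinc (π*(z+l))| ^ P * |z+(l:ℝ)| ^ t) := by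
  have hg : Summable (fun l : ℤ => 9 * ((1:ℝ) + |(l:ℝ)|)⁻¹ ^ 2) := summable_int_decay.mul_left 9
  refine Summable.of_nonneg_of_le (fun l => by positivity) (fun l => ?_) hg
  set T := |z + (l:ℝ)| with hTdef
  have hT0 : 0 ≤ T := abs_nonneg _
  have hl : |(l:ℝ)| ≤ T + 1 := by
    calc |(l:ℝ)| = |(z + l) - z| := by ring_nf
    _ ≤ |z + l| + |z| := abs_sub _ _
    _ ≤ T + 1 := by rw [abs_of_pos hz0]; linarith
  have hgl : 9 * ((1:ℝ) + |(l:ℝ)|)⁻¹ ^ 2 = 9 / ((1:ℝ) + |(l:ℝ)|)^2 := by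
    rw [inv_pow, div_eq_mul_inv]
  rw [hgl]
  rcases le_or_gt T 1 with hT | hT
  · have h1 : |_root_.sinc (π*(z+l))| ^ P * T ^ t ≤ 1 := by
      have ha : |_root_.sinc (π*(z+l))| ^ P ≤ 1 := pow_le_one₀ (abs_nonneg _) (_root_.abs_sinc_le_one _)
      have hb : T ^ t ≤ 1 := pow_le_one₀ hT0 hT
      calc |_root_.sinc (π*(z+l))| ^ P * T ^ t ≤ 1 * 1 :=
            mul_le_mul ha hb (by positivity) (by linarith [ha, pow_nonneg (abs_nonneg (_root_.sinc (π*(z+l)))) P])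
        _ = 1 := one_mul 1
    refine h1.trans ?_
    rw [le_div_iff₀ (by positivity)]
    nlinarith [abs_nonneg (l:ℝ)]
  · have hTne : z + (l:ℝ) ≠ 0 := by
      intro h0
      rw [hTdef, h0] at hT; simp at hT; linarith
    have hs : |_root_.sinc (π*(z+l))| ≤ T⁻¹ := by
      have h1 : |_root_.sinc (π*(z+l))| ≤ |π*(z+l)|⁻¹ := by
        refine abs_sinc_le_inv _ (by positivity)
      refine h1.trans ?_
      rw [abs_mul, abs_of_pos Real.pi_pos]
      rw [inv_le_inv₀ (by positivity) (by positivity)]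
      nlinarith [Real.pi_gt_three]
    have hf2 : |_root_.sinc (π*(z+l))| ^ P * T ^ t ≤ (T⁻¹)^2 := by
      have step1 : |_root_.sinc (π*(z+l))| ^ P * T ^ t ≤ (T⁻¹)^P * T^t := by
        have := pow_le_pow_left₀ (abs_nonneg _) hs P
        exact mul_le_mul_of_nonneg_right this (by positivity)
      refine step1.trans ?_
      rw [inv_pow, inv_pow]
      rw [div_eq_mul_inv] at *
      have hTP : T^(t+2) ≤ T^P := pow_le_pow_right₀ hT.le h
      calc (T^P)⁻¹ * T^t ≤ (T^(t+2))⁻¹ * T^t := by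
            refine mul_le_mul_of_nonneg_right ?_ (by positivity)
            exact inv_anti₀ (by positivity) hTP
        _ = (T^2)⁻¹ := by
            rw [pow_add]
            field_simp
    refine hf2.trans ?_
    rw [inv_pow, ← one_div, div_le_div_iff₀ (by positivity) (by positivity)]
    have h2 : ((1:ℝ)+|(l:ℝ)|)^2 ≤ (T+2)^2 := by nlinarith [hl, abs_nonneg (l:ℝ)]
    nlinarith [h2, hT]

/-! ### Almost-everywhere fundamental theorem of calculus -/

open Filter Metric in
lemma aeFTC (f : ℝ → ℂ) (hf : Integrable f volume) :
    ∀ᵐ x ∂(volume : Measure ℝ), HasDerivAt (fun y => ∫ t in (0:ℝ)..y, f t) (f x) x := by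
  filter_upwards [IsUnifLocDoublingMeasure.ae_tendsto_average_norm_sub volume
    hf.locallyIntegrable 1] with x hx
  have hT : Tendsto (fun r => ⨍ y in closedBall x r, ‖f y - f x‖ ∂volume)
      (nhdsWithin 0 (Set.Ioi 0)) (nhds 0) := by
    refine hx (fun _ => x) id tendsto_id ?_
    refine Filter.eventually_of_mem self_mem_nhdsWithin (fun r hr => ?_)
    simp only [Metric.mem_closedBall, dist_self]
    have h : (0:ℝ) < r := hr
    simpa using h.le
  rw [hasDerivAt_iff_isLittleO, Asymptotics.isLittleO_iff]
  intro ε hε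
  have h2 : ∀ᶠ r in nhdsWithin 0 (Set.Ioi 0),
      (⨍ y in closedBall x r, ‖f y - f x‖ ∂volume) < ε/2 := by
    refine hT.eventually_lt_const (by positivity)
  rw [eventually_nhdsWithin_iff, Metric.eventually_nhds_iff] at h2
  obtain ⟨r₀, hr₀, H⟩ := h2
  filter_upwards [Metric.ball_mem_nhds x hr₀] with y hy
  rcases eq_or_ne y x with rfl | hyx
  · simp
  · set r := |y - x| with hr
    have hrpos : 0 < r := abs_pos.2 (sub_ne_zero.2 hyx)
    have hrlt : r < r₀ := by
      rw [Metric.mem_ball, Real.dist_eq] at hy; exact hy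
    have havg : (⨍ t in closedBall x r, ‖f t - f x‖ ∂volume) < ε/2 := by
      refine H ?_ hrpos
      simpa [Real.dist_eq, abs_of_pos hrpos] using hrlt
    have hFsub : (∫ t in (0:ℝ)..y, f t) - (∫ t in (0:ℝ)..x, f t) = ∫ t in x..y, f t :=
      intervalIntegral.integral_interval_sub_left hf.intervalIntegrable hf.intervalIntegrable
    have hconst : (y - x) • f x = ∫ t in x..y, f x := by
      rw [intervalIntegral.integral_const]
    have key : (∫ t in (0:ℝ)..y, f t) - (∫ t in (0:ℝ)..x, f t) - (y - x) • f x
        = ∫ t in x..y, (f t - f x) := by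
      rw [hFsub, hconst, intervalIntegral.integral_sub hf.intervalIntegrable
        intervalIntegrable_const]
    rw [key]
    have hsub : Set.uIoc x y ⊆ closedBall x r := by
      intro t ht
      rw [Metric.mem_closedBall, Real.dist_eq]
      rcases Set.mem_uIoc.1 ht with h | h
      · rw [abs_of_pos (by linarith [h.1, h.2])]
        have : y - x ≤ r := le_abs_self _
        linarith [h.2, this]
      · rw [abs_of_nonpos (by linarith [h.1, h.2])]
        have : -(y - x) ≤ r := neg_le_abs _
        linarith [h.2, this]
    have hint : IntegrableOn (fun t => ‖f t - f x‖) (closedBall x r) volume :=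
      ((hf.integrableOn.sub (integrableOn_const measure_closedBall_lt_top.ne)).norm)
    calc ‖∫ t in x..y, (f t - f x)‖
        ≤ ∫ t in Set.uIoc x y, ‖f t - f x‖ ∂volume :=
          intervalIntegral.norm_integral_le_integral_norm_uIoc
      _ ≤ ∫ t in closedBall x r, ‖f t - f x‖ ∂volume := by
          refine setIntegral_mono_set hint ?_ (Filter.Eventually.of_forall hsub)
          exact Filter.Eventually.of_forall (fun t => norm_nonneg _)
      _ = (volume (closedBall x r)).toReal * ⨍ t in closedBall x r, ‖f t - f x‖ ∂volume := by
          have h2r : (volume (closedBall x r)).toReal ≠ 0 := by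
            rw [Real.volume_closedBall, ENNReal.toReal_ofReal (by positivity)]
            positivity
          rw [setAverage_eq, smul_eq_mul, measureReal_def, ← mul_assoc, mul_inv_cancel₀ h2r, one_mul]
      _ ≤ (2*r) * (ε/2) := by
          rw [Real.volume_closedBall]
          rw [ENNReal.toReal_ofReal (by positivity)]
          have h1 : 0 ≤ ⨍ t in closedBall x r, ‖f t - f x‖ ∂volume := by
            rw [setAverage_eq]
            exact smul_nonneg (by positivity)
              (setIntegral_nonneg measurableSet_closedBall fun t _ => norm_nonneg _)
          nlinarith [havg]
      _ = ε * ‖y - x‖ := by rw [Real.norm_eq_abs, ← hr]; ring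

/-! ### Complex exponentials and their `L²` theory on `(0,1]` -/

noncomputable def ec (m : ℤ) : ℂ := -2 * π * Complex.I * m
noncomputable def efun (m : ℤ) (x : ℝ) : ℂ := Complex.exp (ec m * x)

lemma ec_ne (m : ℤ) (hm : m ≠ 0) : ec m ≠ 0 := by
  unfold ec
  simp only [mul_ne_zero_iff]
  refine ⟨⟨⟨by norm_num, by exact_mod_cast Real.pi_ne_zero⟩, Complex.I_ne_zero⟩, ?_⟩
  exact_mod_cast hm

lemma hasDerivAt_efun (m : ℤ) (x : ℝ) : HasDerivAt (efun m) (ec m * efun m x) x := by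
  have h1 : HasDerivAt (fun x : ℝ => (x:ℂ)) 1 x := by
    exact (hasDerivAt_id x).ofReal_comp
  have h2 : HasDerivAt (fun x : ℝ => ec m * (x:ℂ)) (ec m) x := by
    simpa using h1.const_mul (ec m)
  have h3 := h2.cexp
  rw [mul_comm] at h3
  exact h3

lemma norm_efun (m : ℤ) (x : ℝ) : ‖efun m x‖ = 1 := by
  have h : ec m * x = ((-2*π*m*x : ℝ):ℂ) * Complex.I := by
    unfold ec; push_cast; ring
  rw [efun, h, Complex.norm_exp_ofReal_mul_I]

lemma conj_efun (m : ℤ) (x : ℝ) : conj (efun m x) = efun (-m) x := by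
  rw [efun, efun, ← Complex.exp_conj]
  congr 1
  simp only [ec, map_mul, Complex.conj_I, Complex.conj_ofReal, map_neg, map_ofNat,
    map_intCast]
  push_cast
  ring

lemma efun_mul (a b : ℤ) (x : ℝ) : efun a x * efun b x = efun (a+b) x := by
  rw [efun, efun, efun, ← Complex.exp_add]
  congr 1
  unfold ec; push_cast; ring

lemma efun_zero (x : ℝ) : efun 0 x = 1 := by simp [efun, ec]

lemma efun_apply_zero (m : ℤ) : efun m 0 = 1 := by simp [efun]

lemma integral_efun (m : ℤ) : (∫ x in (0:ℝ)..1, efun m x) = if m = 0 then 1 else 0 := by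
  rcases eq_or_ne m 0 with rfl | hm
  · simp [efun_zero]
  · rw [if_neg hm]
    unfold efun
    rw [integral_exp_mul_complex (ec_ne m hm)]
    have h1 : Complex.exp (ec m * ((1:ℝ):ℂ)) = 1 := by
      have h2 : ec m * ((1:ℝ):ℂ) = ((-m : ℤ):ℂ) * (2 * π * Complex.I) := by
        unfold ec; push_cast; ring
      rw [h2, Complex.exp_int_mul_two_pi_mul_I]
    rw [h1]
    norm_num

lemma integral_efun_to (m : ℤ) (hm : m ≠ 0) (x : ℝ) :
    (∫ t in (0:ℝ)..x, efun m t) = (efun m x - 1) / ec m := by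
  unfold efun
  rw [integral_exp_mul_complex (ec_ne m hm)]
  norm_num

lemma continuous_efun (m : ℤ) : Continuous (efun m) :=
  Complex.continuous_exp.comp ((continuous_const.mul Complex.continuous_ofReal))

noncomputable def mu0 : Measure ℝ := volume.restrict (Set.Ioc 0 1)

instance : IsFiniteMeasure mu0 := by
  constructor
  rw [mu0, Measure.restrict_apply MeasurableSet.univ, Set.univ_inter, Real.volume_Ioc]
  norm_num

lemma memLp_efun (m : ℤ) : MemLp (efun m) 2 mu0 :=
  MemLp.of_bound (continuous_efun m).aestronglyMeasurable 1
    (Filter.Eventually.of_forall (fun x => le_of_eq (norm_efun m x)))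

noncomputable def eLp (m : ℤ) : Lp ℂ 2 mu0 := (memLp_efun m).toLp _

lemma integral_mu0 (f : ℝ → ℂ) : (∫ a, f a ∂mu0) = ∫ x in (0:ℝ)..1, f x := by
  rw [intervalIntegral.integral_of_le (by norm_num), mu0]

lemma inner_eLp (m n : ℤ) : (inner ℂ (eLp m) (eLp n) : ℂ) = if m = n then 1 else 0 := by
  unfold eLp
  rw [MeasureTheory.L2.inner_def]
  have h1 : ∀ᵐ a ∂mu0, (inner ℂ (((memLp_efun m).toLp _ : Lp ℂ 2 mu0) a)
      (((memLp_efun n).toLp _ : Lp ℂ 2 mu0) a) : ℂ) = efun (n - m) a := by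
    filter_upwards [(memLp_efun m).coeFn_toLp, (memLp_efun n).coeFn_toLp] with a ha hb
    rw [ha, hb, RCLike.inner_apply, conj_efun, efun_mul]
    congr 1
  rw [integral_congr_ae h1, integral_mu0, integral_efun]
  by_cases h : m = n
  · rw [if_pos (by omega : n - m = 0), if_pos h]
  · rw [if_neg (by omega : ¬ n - m = 0), if_neg h]

lemma orthonormal_eLp : Orthonormal ℂ eLp := orthonormal_iff_ite.mpr inner_eLp

lemma summable_smul_eLp (b : ℤ → ℂ) (v : ℤ → ℤ) (hv : Function.Injective v)
    (hb : Summable fun l => ‖b l‖^2) : Summable (fun l => b l • eLp (v l)) := by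
  have hon : Orthonormal ℂ (eLp ∘ v) := orthonormal_eLp.comp v hv
  have h2 := (hon.orthogonalFamily.summable_iff_norm_sq_summable b).2 (by
    refine hb.congr fun l => ?_
    norm_num)
  refine h2.congr fun l => ?_
  rw [LinearIsometry.toSpanSingleton_apply]
  rfl

lemma inner_tsum_right (g : Lp ℂ 2 mu0) (w : ℤ → Lp ℂ 2 mu0) (hw : Summable w) :
    (inner ℂ g (∑' l, w l) : ℂ) = ∑' l, (inner ℂ g (w l) : ℂ) := by
  simpa using (innerSL ℂ g).map_tsum hw

/-! ### The series defining the derivatives of `D_i` -/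

def frq (K i : ℕ) (l : ℤ) : ℤ := (i:ℤ) + l * K

noncomputable def coefR (K p i : ℕ) (l : ℤ) : ℝ := _root_.sinc (π * ((i:ℝ)/K + l)) ^ (p+1)

noncomputable def termF (K p i : ℕ) (s : ℕ) (l : ℤ) (x : ℝ) : ℂ :=
  ((coefR K p i l : ℝ):ℂ) * (ec (frq K i l))^s * efun (frq K i l) x

noncomputable def bC (K p q i : ℕ) (l : ℤ) : ℂ :=
  ((coefR K p i l : ℝ):ℂ) * (ec (frq K i l))^q

lemma frq_cast (K i : ℕ) (hK : 1 ≤ K) (l : ℤ) :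
    ((frq K i l : ℤ) : ℝ) = K * ((i:ℝ)/K + l) := by
  have hK0 : (K:ℝ) ≠ 0 := by positivity
  unfold frq
  push_cast
  field_simp

lemma frq_ne_zero (K i : ℕ) (hi1 : 1 ≤ i) (hiK : i < K) (l : ℤ) : frq K i l ≠ 0 := by
  unfold frq
  intro h
  rcases le_or_gt 0 l with hl | hl
  · have : (0:ℤ) < (i:ℤ) + l * K := by
      have : (0:ℤ) ≤ l * K := mul_nonneg hl (by positivity)
      omega
    omega
  · have hl1 : l ≤ -1 := by omega
    have : l * K ≤ -K := by
      have := mul_le_mul_of_nonneg_right hl1 (show (0:ℤ) ≤ K by positivity)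
      simpa using this
    omega

lemma frq_inj (K i : ℕ) (hK : 1 ≤ K) : Function.Injective (frq K i) := by
  intro a b hab
  unfold frq at hab
  have hK' : K ≠ 0 := by omega
  have hK0 : (K:ℤ) ≠ 0 := by exact_mod_cast hK'
  have : a * K = b * K := by omega
  exact mul_right_cancel₀ hK0 this

lemma frq_ne_frq (K i j : ℕ) (hi1 : 1 ≤ i) (hiK : i < K) (hj1 : 1 ≤ j) (hjK : j < K)
    (hij : i ≠ j) (l l' : ℤ) : frq K i l ≠ frq K j l' := by
  unfold frq
  intro h
  have hd : (l' - l) * K = (i:ℤ) - j := by ring_nf; omega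
  have hne : l' - l ≠ 0 := by
    intro h0
    rw [h0, zero_mul] at hd
    have : (i:ℤ) = j := by omega
    exact hij (by exact_mod_cast this)
  have h1 : (1:ℤ) ≤ |l' - l| := Int.one_le_abs hne
  have h2 : |(i:ℤ) - j| < K := by
    rw [abs_lt]
    constructor <;> omega
  have h3 : (K:ℤ) ≤ |(l' - l) * K| := by
    rw [abs_mul, abs_of_nonneg (show (0:ℤ) ≤ K by positivity)]
    nlinarith
  rw [hd] at h3
  omega

lemma norm_ec (m : ℤ) : ‖ec m‖ = 2 * π * |(m:ℝ)| := by
  unfold ec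
  simp only [norm_mul, norm_neg, Complex.norm_I, Complex.norm_intCast, Complex.norm_real,
    Real.norm_eq_abs, Complex.norm_ofNat, mul_one]
  rw [abs_of_pos Real.pi_pos]

lemma norm_termF (K p i s : ℕ) (l : ℤ) (x : ℝ) :
    ‖termF K p i s l x‖ = |coefR K p i l| * (2*π*|((frq K i l : ℤ):ℝ)|)^s := by
  unfold termF
  rw [norm_mul, norm_mul, norm_pow, norm_ec, norm_efun, mul_one, Complex.norm_real,
    Real.norm_eq_abs]

lemma summable_norm_termF (K p i : ℕ) (hK : 1 ≤ K) (hi1 : 1 ≤ i) (hiK : i ≤ K)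
    (s : ℕ) (hs : s + 2 ≤ p + 1) (x : ℝ) :
    Summable (fun l : ℤ => ‖termF K p i s l x‖) := by
  have hz0 : 0 < (i:ℝ)/K := by positivity
  have hz1 : (i:ℝ)/K ≤ 1 := by
    rw [div_le_one (by positivity)]
    exact_mod_cast hiK
  have h := (summable_sinc_pow ((i:ℝ)/K) hz0 hz1 (p+1) s hs).mul_left ((2*π*K)^s)
  refine h.congr fun l => ?_
  rw [norm_termF, frq_cast K i hK]
  unfold coefR
  rw [abs_pow, abs_mul, abs_of_nonneg (show (0:ℝ) ≤ K by positivity)]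
  rw [show 2*π*((K:ℝ)*|(i:ℝ)/K + l|) = (2*π*K) * |(i:ℝ)/K + l| by ring, mul_pow]
  ring

lemma summable_termF (K p i : ℕ) (hK : 1 ≤ K) (hi1 : 1 ≤ i) (hiK : i ≤ K)
    (s : ℕ) (hs : s + 2 ≤ p + 1) (x : ℝ) :
    Summable (fun l : ℤ => termF K p i s l x) :=
  (summable_norm_termF K p i hK hi1 hiK s hs x).of_norm

lemma hasDerivAt_termF (K p i s : ℕ) (l : ℤ) (x : ℝ) :
    HasDerivAt (fun y => termF K p i s l y) (termF K p i (s+1) l x) x := by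
  have h := (hasDerivAt_efun (frq K i l) x).const_mul
    (((coefR K p i l : ℝ):ℂ) * (ec (frq K i l))^s)
  have he : ((coefR K p i l : ℝ):ℂ) * (ec (frq K i l))^s * (ec (frq K i l) * efun (frq K i l) x)
      = termF K p i (s+1) l x := by
    unfold termF
    ring
  rw [he] at h
  exact h

lemma iteratedDeriv_termF_sum (K p i : ℕ) (hK : 1 ≤ K) (hi1 : 1 ≤ i) (hiK : i ≤ K)
    (s : ℕ) (hs : s + 1 ≤ p) :
    iteratedDeriv s (fun x => ∑' l : ℤ, termF K p i 0 l x)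
      = fun x => ∑' l : ℤ, termF K p i s l x := by
  induction s with
  | zero => simp [iteratedDeriv_zero]
  | succ s ih =>
    rw [iteratedDeriv_succ, ih (by omega)]
    funext x
    have hder : ∀ (l : ℤ) (y : ℝ), HasDerivAt (fun z => termF K p i s l z)
        (termF K p i (s+1) l y) y := fun l y => hasDerivAt_termF K p i s l y
    have hu : Summable (fun l : ℤ => ‖termF K p i (s+1) l 0‖) :=
      summable_norm_termF K p i hK hi1 hiK (s+1) (by omega) 0
    have h := deriv_tsum_apply (u := fun l : ℤ => ‖termF K p i (s+1) l 0‖)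
      (g := fun (l : ℤ) (y : ℝ) => termF K p i s l y) (y₀ := (0:ℝ)) hu
      (fun l => fun y => (hder l y).differentiableAt)
      (fun l y => le_of_eq (by
        rw [(hder l y).deriv, norm_termF]
        show _ = ‖termF K p i (s+1) l 0‖
        rw [norm_termF]))
      (summable_termF K p i hK hi1 hiK s (by omega) 0) x
    rw [h]
    exact tsum_congr fun l => (hder l x).deriv

lemma Dfun_eq_tsum (K p i : ℕ) :
    Dfun K p i = fun x => ∑' l : ℤ, termF K p i 0 l x := by
  funext x
  unfold Dfun
  refine tsum_congr fun l => ?_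
  unfold Dterm termF coefR efun ec frq
  rw [pow_zero, mul_one]
  congr 2
  push_cast
  ring

/-! ### The `L²` element representing the `q`-th derivative -/

noncomputable def HH (K p q i : ℕ) : Lp ℂ 2 mu0 :=
  ∑' l : ℤ, bC K p q i l • eLp (frq K i l)

lemma norm_bC_sq (K p q i : ℕ) (hK : 1 ≤ K) (l : ℤ) :
    ‖bC K p q i l‖^2 = (2*π*K)^(q*2) *
      (|_root_.sinc (π*((i:ℝ)/K+l))| ^ ((p+1)*2) * |(i:ℝ)/K+(l:ℝ)| ^ (q*2)) := by
  unfold bC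
  rw [norm_mul, norm_pow, norm_ec, Complex.norm_real, Real.norm_eq_abs, frq_cast K i hK]
  unfold coefR
  rw [abs_pow, abs_mul, abs_of_nonneg (show (0:ℝ) ≤ (K:ℝ) by positivity)]
  rw [mul_pow, ← pow_mul, ← pow_mul,
    show 2*π*((K:ℝ)*|(i:ℝ)/K+(l:ℝ)|) = (2*π*(K:ℝ))*|(i:ℝ)/K+(l:ℝ)| by ring, mul_pow]
  ring

lemma summable_bC_smul (K p q i : ℕ) (hK : 1 ≤ K) (hi1 : 1 ≤ i) (hiK : i ≤ K)
    (hqp : q ≤ p) : Summable (fun l : ℤ => bC K p q i l • eLp (frq K i l)) := by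
  refine summable_smul_eLp _ _ (frq_inj K i hK) ?_
  have hz0 : 0 < (i:ℝ)/K := by positivity
  have hz1 : (i:ℝ)/K ≤ 1 := by
    rw [div_le_one (by positivity)]
    exact_mod_cast hiK
  have h := (summable_sinc_pow ((i:ℝ)/K) hz0 hz1 ((p+1)*2) (q*2) (by omega)).mul_left
    ((2*π*K)^(q*2))
  exact h.congr fun l => (norm_bC_sq K p q i hK l).symm

/-! ### Trivial case `i = K` -/

lemma Dfun_K (K p : ℕ) (hK : 1 ≤ K) (x : ℝ) : Dfun K p K x = 1 := by
  unfold Dfun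
  have hKr : ((K:ℝ))/K = 1 := div_self (by positivity)
  rw [tsum_eq_single (-1 : ℤ) ?_]
  · unfold Dterm
    rw [hKr]
    have h0 : π * ((1:ℝ) + ((-1:ℤ):ℝ)) = 0 := by push_cast; ring
    rw [h0, _root_.sinc_zero, one_pow]
    have h1 : (-2 * (π:ℂ) * Complex.I * (x:ℂ) * ((K:ℂ) + ((-1:ℤ):ℂ) * (K:ℂ))) = 0 := by
      push_cast; ring
    rw [h1, Complex.exp_zero]
    norm_num
  · intro l hl
    unfold Dterm
    have h1 : _root_.sinc (π * ((K:ℝ)/K + l)) = 0 := by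
      rw [hKr]
      have : (1:ℝ) + l = ((1 + l : ℤ) : ℝ) := by push_cast; ring
      rw [this]
      exact sinc_int_zero _ (by omega)
    rw [h1, zero_pow (by omega)]
    norm_num

lemma Qs_K (n : ℕ) (hn : n ≠ 0) : Qs n 1 = 1 := by
  unfold Qs
  rw [tsum_eq_single (-1 : ℤ) ?_]
  · have h0 : π * ((1:ℝ) + ((-1:ℤ):ℝ)) = 0 := by push_cast; ring
    rw [h0, _root_.sinc_zero, one_pow]
  · intro l hl
    have h1 : _root_.sinc (π * (1 + l)) = 0 := by
      have : (1:ℝ) + l = ((1 + l : ℤ) : ℝ) := by push_cast; ring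
      rw [this]
      exact sinc_int_zero _ (by omega)
    rw [h1, zero_pow hn]

lemma phiDR_K (K p : ℕ) (hK : 1 ≤ K) : phiDR K p K = fun _ => 1 := by
  funext x
  unfold phiDR
  rw [Dfun_K K p hK x]
  have hKr : ((K:ℝ))/K = 1 := div_self (by positivity)
  rw [hKr, Qs_K _ (by omega), Real.sqrt_one]
  norm_num

lemma iteratedDeriv_const_one (q : ℕ) (hq : 1 ≤ q) :
    iteratedDeriv q (fun _ : ℝ => (1:ℂ)) = fun _ => 0 := by
  obtain ⟨q', rfl⟩ : ∃ q', q = q' + 1 := ⟨q - 1, by omega⟩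
  rw [iteratedDeriv_succ']
  have h0 : (deriv fun _ : ℝ => (1:ℂ)) = fun _ => 0 := by
    funext x; exact deriv_const x 1
  rw [h0]
  induction q' with
  | zero => simp [iteratedDeriv_zero]
  | succ n ih =>
    rw [iteratedDeriv_succ', show (deriv fun _ : ℝ => (0:ℂ)) = fun _ => 0 by
      funext x; exact deriv_const x 0]
    exact ih (by omega)

lemma muDR_K (K p q : ℕ) (hK : 1 ≤ K) (hq : 1 ≤ q) : muDR K p q K = 0 := by
  unfold muDR
  have hKr : π * (K:ℝ) / K = π := by
    rw [mul_div_assoc, div_self (by positivity), mul_one]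
  rw [hKr]
  have : _root_.sinc π = 0 := by
    have := sinc_int_zero 1 (by norm_num)
    simpa using this
  rw [this, zero_pow (by omega)]
  ring

/-! ### `iteratedDeriv` of `f / c` -/

lemma iteratedDeriv_div_const' (f : ℝ → ℂ) (c : ℂ) (n : ℕ) :
    iteratedDeriv n (fun x => f x / c) = fun x => iteratedDeriv n f x / c := by
  induction n with
  | zero => simp [iteratedDeriv_zero]
  | succ n ih =>
    rw [iteratedDeriv_succ, ih, iteratedDeriv_succ]
    funext x
    exact deriv_div_const c

/-! ### Positivity of `Qs` -/

lemma Qs_nonneg (n : ℕ) (z : ℝ) (hn : Even n) : 0 ≤ Qs n z := by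
  unfold Qs
  refine tsum_nonneg fun l => hn.pow_nonneg _

lemma summable_Qs (n : ℕ) (z : ℝ) (hz0 : 0 < z) (hz1 : z ≤ 1) (hn : 2 ≤ n) (hne : Even n) :
    Summable (fun l : ℤ => _root_.sinc (π * (z + l)) ^ n) := by
  have h := summable_sinc_pow z hz0 hz1 n 0 (by omega)
  refine h.congr fun l => ?_
  rw [pow_zero, mul_one, hne.pow_abs]

lemma Qs_pos_s4 (n : ℕ) (z : ℝ) (hz0 : 0 < z) (hz1 : z < 1) (hn : 2 ≤ n) (hne : Even n) :
    0 < Qs n z := by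
  have hsum := summable_Qs n z hz0 hz1.le hn hne
  have hπz : 0 < π * (z + ((0:ℤ):ℝ)) := by
    have : ((0:ℤ):ℝ) = 0 := by norm_num
    rw [this, add_zero]
    positivity
  have hterm : 0 < _root_.sinc (π * (z + ((0:ℤ):ℝ))) ^ n := by
    have hlt : π * (z + ((0:ℤ):ℝ)) < π := by
      have : ((0:ℤ):ℝ) = 0 := by norm_num
      rw [this, add_zero]
      nlinarith [Real.pi_pos]
    have hsin : 0 < Real.sin (π * (z + ((0:ℤ):ℝ))) :=
      Real.sin_pos_of_pos_of_lt_pi hπz hlt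
    have hsc : 0 < _root_.sinc (π * (z + ((0:ℤ):ℝ))) := by
      unfold _root_.sinc
      rw [if_neg (ne_of_gt hπz)]
      positivity
    positivity
  exact lt_of_lt_of_le hterm (hsum.le_tsum 0 fun j _ => hne.pow_nonneg _)


/-! ### Key integral representation -/

lemma integrable_Hc (K p q i : ℕ) :
    Integrable ((Set.Ioc (0:ℝ) 1).indicator (⇑(HH K p q i))) volume := by
  have hHr : Integrable (⇑(HH K p q i)) mu0 :=
    (MeasureTheory.Lp.memLp _).integrable (by norm_num)
  exact IntegrableOn.integrable_indicator hHr measurableSet_Ioc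

lemma key_B (K p q i : ℕ) (hK : 1 ≤ K) (hq : 1 ≤ q) (hqp : q ≤ p)
    (hi1 : 1 ≤ i) (hiK : i < K) (x : ℝ) (hx0 : 0 ≤ x) (hx1 : x ≤ 1) :
    (∑' l : ℤ, termF K p i (q-1) l x) = (∑' l : ℤ, termF K p i (q-1) l 0)
      + ∫ t in (0:ℝ)..x, (Set.Ioc (0:ℝ) 1).indicator (⇑(HH K p q i)) t := by
  have hIoc : Set.Ioc (0:ℝ) x ⊆ Set.Ioc 0 1 := Set.Ioc_subset_Ioc_right hx1
  have hmeas : MeasurableSet (Set.Ioc (0:ℝ) x) := measurableSet_Ioc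
  have hsum := summable_bC_smul K p q i hK hi1 (le_of_lt hiK) hqp
  have hrr : ∀ g : ℝ → ℂ, (∫ t in Set.Ioc (0:ℝ) x, g t ∂volume)
      = ∫ t in Set.Ioc (0:ℝ) x, g t ∂mu0 := by
    intro g
    rw [mu0, Measure.restrict_restrict hmeas, Set.inter_eq_self_of_subset_left hIoc]
  have h1 : (∫ t in (0:ℝ)..x, (Set.Ioc (0:ℝ) 1).indicator (⇑(HH K p q i)) t)
      = (inner ℂ (indicatorConstLp 2 hmeas (measure_ne_top mu0 _) (1:ℂ)) (HH K p q i) : ℂ) := by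
    rw [intervalIntegral.integral_of_le hx0]
    rw [MeasureTheory.L2.inner_indicatorConstLp_one hmeas (measure_ne_top mu0 _) (HH K p q i)]
    rw [← hrr]
    exact setIntegral_congr_fun hmeas (fun t ht => Set.indicator_of_mem (hIoc ht) _)
  have h3 : ∀ l : ℤ, (inner ℂ (indicatorConstLp 2 hmeas (measure_ne_top mu0 _) (1:ℂ))
      (eLp (frq K i l)) : ℂ) = (efun (frq K i l) x - 1) / ec (frq K i l) := by
    intro l
    rw [MeasureTheory.L2.inner_indicatorConstLp_one hmeas (measure_ne_top mu0 _) (eLp _)]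
    have hcoe : (∫ t in Set.Ioc (0:ℝ) x, (eLp (frq K i l) : ℝ → ℂ) t ∂mu0)
        = ∫ t in Set.Ioc (0:ℝ) x, efun (frq K i l) t ∂mu0 := by
      refine setIntegral_congr_ae hmeas ?_
      filter_upwards [(memLp_efun (frq K i l)).coeFn_toLp] with t ht _
      exact ht
    rw [hcoe, ← hrr, ← intervalIntegral.integral_of_le hx0,
      integral_efun_to _ (frq_ne_zero K i hi1 hiK l) x]
  have h2 : (inner ℂ (indicatorConstLp 2 hmeas (measure_ne_top mu0 _) (1:ℂ))
      (HH K p q i) : ℂ) = ∑' l : ℤ, (termF K p i (q-1) l x - termF K p i (q-1) l 0) := by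
    unfold HH
    rw [inner_tsum_right _ _ hsum]
    refine tsum_congr fun l => ?_
    rw [inner_smul_right, h3 l]
    have hm := ec_ne _ (frq_ne_zero K i hi1 hiK l)
    unfold bC termF
    rw [efun_apply_zero, mul_one]
    obtain ⟨q', rfl⟩ : ∃ q', q = q' + 1 := ⟨q-1, by omega⟩
    simp only [Nat.add_sub_cancel]
    rw [pow_succ]
    field_simp
  have hs1 : Summable (fun l : ℤ => termF K p i (q-1) l x) :=
    summable_termF K p i hK hi1 hiK.le (q-1) (by omega) x
  have hs0 : Summable (fun l : ℤ => termF K p i (q-1) l 0) :=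
    summable_termF K p i hK hi1 hiK.le (q-1) (by omega) 0
  rw [h1, h2, hs1.tsum_sub hs0]
  ring

lemma aeDerivMain (K p q i : ℕ) (hK : 1 ≤ K) (hq : 1 ≤ q) (hqp : q ≤ p)
    (hi1 : 1 ≤ i) (hiK : i < K) :
    ∀ᵐ x ∂(volume : Measure ℝ), x ∈ Set.Ioo (0:ℝ) 1 →
      iteratedDeriv q (Dfun K p i) x = (HH K p q i : ℝ → ℂ) x := by
  obtain ⟨q', rfl⟩ : ∃ q', q = q' + 1 := ⟨q-1, by omega⟩
  set Hc := (Set.Ioc (0:ℝ) 1).indicator (⇑(HH K p (q'+1) i)) with hHc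
  filter_upwards [aeFTC Hc (integrable_Hc K p (q'+1) i)] with x hFTC hxIoo
  set G := fun y : ℝ => ∑' l : ℤ, termF K p i q' l y with hGdef
  have hG : G =ᶠ[nhds x] fun y => (G 0) + ∫ t in (0:ℝ)..y, Hc t := by
    filter_upwards [isOpen_Ioo.mem_nhds hxIoo] with y hy
    have := key_B K p (q'+1) i hK hq hqp hi1 hiK y hy.1.le hy.2.le
    simpa only [Nat.add_sub_cancel] using this
  have hDer : HasDerivAt G (Hc x) x :=
    HasDerivAt.congr_of_eventuallyEq (hFTC.const_add (G 0)) hG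
  have hiter : iteratedDeriv (q'+1) (Dfun K p i) x = deriv G x := by
    rw [Dfun_eq_tsum, iteratedDeriv_succ,
      iteratedDeriv_termF_sum K p i hK hi1 hiK.le q' (by omega)]
  rw [hiter, hDer.deriv, hHc, Set.indicator_of_mem (Set.Ioo_subset_Ioc_self hxIoo)]

/-! ### Inner products of the `HH` -/

lemma inner_eLp_HH (K p q j : ℕ) (hK : 1 ≤ K) (hj1 : 1 ≤ j) (hjK : j < K) (hqp : q ≤ p)
    (m : ℤ) : (inner ℂ (eLp m) (HH K p q j) : ℂ)
      = ∑' l' : ℤ, bC K p q j l' * (if m = frq K j l' then 1 else 0) := by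
  unfold HH
  rw [inner_tsum_right _ _ (summable_bC_smul K p q j hK hj1 hjK.le hqp)]
  refine tsum_congr fun l' => ?_
  rw [inner_smul_right, inner_eLp]

lemma inner_HH_cross (K p q i j : ℕ) (hK : 1 ≤ K) (hqp : q ≤ p)
    (hi1 : 1 ≤ i) (hiK : i < K) (hj1 : 1 ≤ j) (hjK : j < K) (hij : i ≠ j) :
    (inner ℂ (HH K p q j) (HH K p q i) : ℂ) = 0 := by
  have hexp : (inner ℂ (HH K p q j) (HH K p q i) : ℂ)
      = ∑' l : ℤ, (inner ℂ (HH K p q j) (bC K p q i l • eLp (frq K i l)) : ℂ) := by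
    conv_lhs => rw [show HH K p q i = ∑' l : ℤ, bC K p q i l • eLp (frq K i l) from rfl]
    exact inner_tsum_right _ _ (summable_bC_smul K p q i hK hi1 hiK.le hqp)
  rw [hexp]
  have hterm : ∀ l : ℤ, (inner ℂ (HH K p q j) (bC K p q i l • eLp (frq K i l)) : ℂ) = 0 := by
    intro l
    rw [inner_smul_right]
    have h0 : (inner ℂ (eLp (frq K i l)) (HH K p q j) : ℂ) = 0 := by
      rw [inner_eLp_HH K p q j hK hj1 hjK hqp]
      have : ∀ l' : ℤ, bC K p q j l' * (if frq K i l = frq K j l' then 1 else 0) = 0 := by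
        intro l'
        rw [if_neg (frq_ne_frq K i j hi1 hiK hj1 hjK hij l l'), mul_zero]
      rw [tsum_congr this, tsum_zero]
    rw [← inner_conj_symm, h0, map_zero, mul_zero]
  rw [tsum_congr hterm, tsum_zero]

lemma bC_mul_conj (K p q i : ℕ) (l : ℤ) :
    bC K p q i l * conj (bC K p q i l)
      = (((coefR K p i l)^2 * (2*π*((frq K i l : ℤ):ℝ))^(2*q) : ℝ) : ℂ) := by
  unfold bC
  rw [map_mul, map_pow, Complex.conj_ofReal]
  have hc : conj (ec (frq K i l)) = - ec (frq K i l) := by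
    unfold ec
    simp only [map_mul, Complex.conj_I, Complex.conj_ofReal, map_neg, map_ofNat, map_intCast]
    ring
  rw [hc]
  have h2 : (ec (frq K i l))^q * (-ec (frq K i l))^q
      = (((2*π*((frq K i l : ℤ):ℝ))^(2*q) : ℝ) : ℂ) := by
    rw [← mul_pow]
    have h3 : ec (frq K i l) * (-ec (frq K i l))
        = (((2*π*((frq K i l : ℤ):ℝ))^2 : ℝ) : ℂ) := by
      unfold ec
      push_cast
      have : Complex.I * Complex.I = -1 := Complex.I_mul_I
      ring_nf
      rw [Complex.I_sq]
      ring
    rw [h3, ← Complex.ofReal_pow]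
    norm_cast
    rw [← pow_mul]
  calc ((coefR K p i l : ℝ):ℂ) * (ec (frq K i l))^q
        * (((coefR K p i l : ℝ):ℂ) * (-ec (frq K i l))^q)
      = (((coefR K p i l : ℝ):ℂ))^2 * ((ec (frq K i l))^q * (-ec (frq K i l))^q) := by ring
    _ = _ := by
        rw [h2, ← Complex.ofReal_pow, ← Complex.ofReal_mul]

lemma inner_HH_diag (K p q i : ℕ) (hK : 1 ≤ K) (hqp : q ≤ p)
    (hi1 : 1 ≤ i) (hiK : i < K) :
    (inner ℂ (HH K p q i) (HH K p q i) : ℂ)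
      = ((∑' l : ℤ, (coefR K p i l)^2 * (2*π*((frq K i l : ℤ):ℝ))^(2*q) : ℝ) : ℂ) := by
  have hexp : (inner ℂ (HH K p q i) (HH K p q i) : ℂ)
      = ∑' l : ℤ, (inner ℂ (HH K p q i) (bC K p q i l • eLp (frq K i l)) : ℂ) := by
    conv_lhs => rw [show HH K p q i = ∑' l : ℤ, bC K p q i l • eLp (frq K i l) from rfl]
    exact inner_tsum_right _ _ (summable_bC_smul K p q i hK hi1 hiK.le hqp)
  rw [hexp]
  have hterm : ∀ l : ℤ, (inner ℂ (HH K p q i) (bC K p q i l • eLp (frq K i l)) : ℂ)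
      = (((coefR K p i l)^2 * (2*π*((frq K i l : ℤ):ℝ))^(2*q) : ℝ) : ℂ) := by
    intro l
    rw [inner_smul_right]
    have h0 : (inner ℂ (eLp (frq K i l)) (HH K p q i) : ℂ) = bC K p q i l := by
      rw [inner_eLp_HH K p q i hK hi1 hiK hqp]
      rw [tsum_eq_single l ?_]
      · rw [if_pos rfl, mul_one]
      · intro l' hl'
        rw [if_neg (fun h => hl' (frq_inj K i hK h).symm), mul_zero]
    rw [← inner_conj_symm, h0, bC_mul_conj]
  rw [tsum_congr hterm, ← Complex.ofReal_tsum]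

/-! ### Evaluation of the diagonal sum -/

lemma sum_diag_eq (K p q i : ℕ) (hK : 1 ≤ K) (hq : 1 ≤ q) (hqp : q ≤ p)
    (hi1 : 1 ≤ i) (hiK : i < K) :
    (∑' l : ℤ, (coefR K p i l)^2 * (2*π*((frq K i l : ℤ):ℝ))^(2*q))
      = (2 * π * i) ^ (2 * q) * _root_.sinc (π * i / K) ^ (2 * q)
        * Qs (2*p - 2*q + 2) ((i:ℝ)/K) := by
  have hK0 : (K:ℝ) ≠ 0 := by positivity
  have hi0 : (i:ℝ) ≠ 0 := by positivity
  have hz0 : (0:ℝ) < (i:ℝ)/K := by positivity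
  have hπz : π * ((i:ℝ)/K) ≠ 0 := by positivity
  have harg : π * (i:ℝ) / K = π * ((i:ℝ)/K) := by rw [mul_div_assoc]
  have hC : ∀ l : ℤ, (coefR K p i l)^2 * (2*π*((frq K i l : ℤ):ℝ))^(2*q)
      = ((2 * π * i) ^ (2 * q) * _root_.sinc (π * i / K) ^ (2 * q))
        * _root_.sinc (π * ((i:ℝ)/K + l)) ^ (2*p - 2*q + 2) := by
    intro l
    unfold coefR
    rw [← pow_mul, show (p+1)*2 = 2*q + (2*p-2*q+2) by omega, pow_add]
    rw [frq_cast K i hK]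
    have key1 : _root_.sinc (π*((i:ℝ)/K+l))^(2*q) * (2*π*((K:ℝ)*((i:ℝ)/K+l)))^(2*q)
        = (2*(K:ℝ))^(2*q) * Real.sin (π*((i:ℝ)/K+l))^(2*q) := by
      rw [← mul_pow, show _root_.sinc (π*((i:ℝ)/K+l)) * (2*π*((K:ℝ)*((i:ℝ)/K+l)))
        = 2*(K:ℝ)*(_root_.sinc (π*((i:ℝ)/K+l)) * (π*((i:ℝ)/K+l))) by ring, sinc_mul, mul_pow]
    have key2 : Real.sin (π*((i:ℝ)/K+l))^(2*q) = Real.sin (π*((i:ℝ)/K))^(2*q) := by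
      rw [show π*((i:ℝ)/K+l) = π*((i:ℝ)/K) + l*π by ring, Real.sin_add_int_mul_pi, mul_pow]
      have h1 : (((-1:ℝ))^l)^(2*q) = 1 := by
        rw [pow_mul]
        have h2 : (((-1:ℝ))^l)^(2:ℕ) = 1 := by
          rw [← zpow_natCast ((-1:ℝ)^l) 2, ← zpow_mul, mul_comm, zpow_mul]
          norm_num
        rw [h2, one_pow]
      rw [h1, one_mul]
    have key3 : (2*(K:ℝ))^(2*q) * Real.sin (π*((i:ℝ)/K))^(2*q)
        = (2*π*(i:ℝ))^(2*q) * _root_.sinc (π * i / K)^(2*q) := by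
      have hsz : _root_.sinc (π * (i:ℝ) / K) = Real.sin (π*((i:ℝ)/K)) / (π*((i:ℝ)/K)) := by
        unfold _root_.sinc
        rw [harg, if_neg hπz]
      have hbase : 2*(K:ℝ) * Real.sin (π*((i:ℝ)/K)) = 2*π*(i:ℝ) * _root_.sinc (π * i / K) := by
        rw [hsz]
        field_simp
      rw [← mul_pow, ← mul_pow, hbase]
    calc (_root_.sinc (π*((i:ℝ)/K+l))^(2*q) * _root_.sinc (π*((i:ℝ)/K+l))^(2*p-2*q+2))
          * (2*π*((K:ℝ)*((i:ℝ)/K+l)))^(2*q)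
        = (_root_.sinc (π*((i:ℝ)/K+l))^(2*q) * (2*π*((K:ℝ)*((i:ℝ)/K+l)))^(2*q))
          * _root_.sinc (π*((i:ℝ)/K+l))^(2*p-2*q+2) := by ring
      _ = ((2*(K:ℝ))^(2*q) * Real.sin (π*((i:ℝ)/K))^(2*q))
          * _root_.sinc (π*((i:ℝ)/K+l))^(2*p-2*q+2) := by rw [key1, key2]
      _ = _ := by rw [key3]
  rw [tsum_congr hC, tsum_mul_left]
  rfl

theorem stmt4 (p q K : ℕ) (hq : 1 ≤ q) (hqp : q ≤ p) (hK : 1 ≤ K) :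
    ∀ i j, 1 ≤ i → i ≤ K → 1 ≤ j → j ≤ K →
      (∫ x in (0:ℝ)..1,
          iteratedDeriv q (phiDR K p i) x * conj (iteratedDeriv q (phiDR K p j) x)) =
        if i = j then ((muDR K p q i : ℝ) : ℂ) else 0 := by
  intro i j hi1 hiK2 hj1 hjK2
  have hzeroK : ∀ x : ℝ, iteratedDeriv q (phiDR K p K) x = 0 := fun x => by
    rw [phiDR_K K p hK, iteratedDeriv_const_one q hq]
  by_cases hi : i = K
  · have h0 : (∫ x in (0:ℝ)..1, iteratedDeriv q (phiDR K p i) x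
        * conj (iteratedDeriv q (phiDR K p j) x)) = 0 := by
      have hz : ∀ x : ℝ, iteratedDeriv q (phiDR K p i) x
          * conj (iteratedDeriv q (phiDR K p j) x) = 0 := by
        intro x; rw [hi, hzeroK x, zero_mul]
      simp only [hz]
      simp
    rw [h0]
    by_cases hij : i = j
    · rw [if_pos hij, hi, muDR_K K p q hK hq, Complex.ofReal_zero]
    · rw [if_neg hij]
  · by_cases hj : j = K
    · have h0 : (∫ x in (0:ℝ)..1, iteratedDeriv q (phiDR K p i) x
          * conj (iteratedDeriv q (phiDR K p j) x)) = 0 := by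
        have hz : ∀ x : ℝ, iteratedDeriv q (phiDR K p i) x
            * conj (iteratedDeriv q (phiDR K p j) x) = 0 := by
          intro x; rw [hj, hzeroK x, map_zero, mul_zero]
        simp only [hz]
        simp
      rw [h0, if_neg (fun h => hi (h.trans hj))]
    · -- main case : 1 ≤ i < K and 1 ≤ j < K
      have hiK : i < K := lt_of_le_of_ne hiK2 hi
      have hjK : j < K := lt_of_le_of_ne hjK2 hj
      have hQpos : ∀ k : ℕ, 1 ≤ k → k < K → 0 < Qs (2*p+2) ((k:ℝ)/K) := by
        intro k hk1 hkK
        refine Qs_pos_s4 _ _ (by positivity) ?_ (by omega) ⟨p+1, by ring⟩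
        rw [div_lt_one (by positivity)]
        exact_mod_cast hkK
      have hQi := hQpos i hi1 hiK
      have hQj := hQpos j hj1 hjK
      have hphi : ∀ (k : ℕ) (x : ℝ), iteratedDeriv q (phiDR K p k) x
          = (((Real.sqrt (Qs (2*p+2) ((k:ℝ)/K)) : ℝ) : ℂ))⁻¹
            * iteratedDeriv q (Dfun K p k) x := by
        intro k x
        have h1 : phiDR K p k
            = fun y => Dfun K p k y / ((Real.sqrt (Qs (2*p+2) ((k:ℝ)/K)) : ℝ) : ℂ) := rfl
        rw [h1, iteratedDeriv_div_const']
        show iteratedDeriv q (Dfun K p k) x / _ = _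
        rw [div_eq_mul_inv, mul_comm]
      have hone : ∀ᵐ x ∂(volume : Measure ℝ), x ≠ (1:ℝ) := by
        rw [MeasureTheory.ae_iff]
        have hset : {x : ℝ | ¬ x ≠ 1} = {1} := by ext t; simp
        rw [hset]
        exact Real.volume_singleton
      have hae : ∀ᵐ x ∂(volume : Measure ℝ), x ∈ Set.uIoc (0:ℝ) 1 →
          iteratedDeriv q (phiDR K p i) x * conj (iteratedDeriv q (phiDR K p j) x)
          = ((((Real.sqrt (Qs (2*p+2) ((i:ℝ)/K)) : ℝ) : ℂ))⁻¹
              * conj ((((Real.sqrt (Qs (2*p+2) ((j:ℝ)/K)) : ℝ) : ℂ))⁻¹)) *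
            ((HH K p q i : ℝ → ℂ) x * conj ((HH K p q j : ℝ → ℂ) x)) := by
        filter_upwards [aeDerivMain K p q i hK hq hqp hi1 hiK,
          aeDerivMain K p q j hK hq hqp hj1 hjK, hone] with x hxi hxj hx1 hmem
        rw [Set.uIoc_of_le (by norm_num : (0:ℝ) ≤ 1)] at hmem
        have hIoo : x ∈ Set.Ioo (0:ℝ) 1 := ⟨hmem.1, lt_of_le_of_ne hmem.2 hx1⟩
        rw [hphi i x, hphi j x, hxi hIoo, hxj hIoo, map_mul]
        ring
      rw [intervalIntegral.integral_congr_ae hae, intervalIntegral.integral_const_mul]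
      have hinner : (∫ x in (0:ℝ)..1,
            (HH K p q i : ℝ → ℂ) x * conj ((HH K p q j : ℝ → ℂ) x))
          = (inner ℂ (HH K p q j) (HH K p q i) : ℂ) := by
        rw [MeasureTheory.L2.inner_def, integral_mu0]
        refine intervalIntegral.integral_congr fun x _ => ?_
        rw [RCLike.inner_apply]
      rw [hinner]
      by_cases hij : i = j
      · subst hij
        rw [if_pos rfl]
        rw [inner_HH_diag K p q i hK hqp hi1 hiK, sum_diag_eq K p q i hK hq hqp hi1 hiK]
        have hcc : ((((Real.sqrt (Qs (2*p+2) ((i:ℝ)/K)) : ℝ) : ℂ))⁻¹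
            * conj ((((Real.sqrt (Qs (2*p+2) ((i:ℝ)/K)) : ℝ) : ℂ))⁻¹))
            = (((Qs (2*p+2) ((i:ℝ)/K) : ℝ) : ℂ))⁻¹ := by
          rw [map_inv₀, Complex.conj_ofReal, ← mul_inv, ← Complex.ofReal_mul,
            Real.mul_self_sqrt (le_of_lt hQi)]
        rw [hcc]
        unfold muDR
        push_cast
        ring
      · rw [if_neg hij, inner_HH_cross K p q i j hK hqp hi1 hiK hj1 hjK hij, mul_zero]
end

section
/- Let p ≥ 1 be an integer and let P be a complex polynomial of degree 2p satisfying the self-reciprocity P(z) = z^{2p}·P(1/z) for all z ≠ 0, whose 2p roots are simple, nonzero, and can be listed as r_1,…,r_p, r_1^{−1},…,r_p^{−1} with 0 < |r_j| < 1 for each j (in particular P has no roots on the unit circle). Then for any integer d and any complex numbers α_0, α_1, …, α_{2p}, ∫_0^1 [ Σ_{l=0}^{2p} α_l · exp(−2πi·(d+l)·u) ] / P(exp(−2πi·u)) du = Σ_{j=1}^{p} Σ_{l=0}^{2p} (α_l / P'(r_j)) · r_j^{ |d+l−1| + (2p−2)·𝟙(d+l ≤ 0) }, where P' is the derivative of P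 and 𝟙(A) equals 1 if A holds and 0 otherwise. -/
open Real MeasureTheory Complex Polynomial intervalIntegral

noncomputable def E (m : ℤ) (u : ℝ) : ℂ := Complex.exp (-2*(π:ℂ)*Complex.I*m*u)

lemma abs_E (m : ℤ) (u : ℝ) : ‖E m u‖ = 1 := by
  rw [E, Complex.norm_exp]; norm_num [Complex.mul_re]

noncomputable def Z (u : ℝ) : ℂ := Complex.exp (-2*(π:ℂ)*Complex.I*u)

lemma abs_Z (u : ℝ) : ‖Z u‖ = 1 := by
  rw [Z, Complex.norm_exp]; norm_num [Complex.mul_re]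

lemma Z_ne (ρ : ℂ) (hρ : ‖ρ‖ ≠ 1) (u : ℝ) : Z u - ρ ≠ 0 := by
  intro h
  apply hρ
  rw [← abs_Z u, sub_eq_zero.mp h]

lemma norm_den (ρ : ℂ) (u : ℝ) : |1 - ‖ρ‖| ≤ ‖Z u - ρ‖ := by
  have := abs_norm_sub_norm_le (Z u) ρ
  simpa [abs_Z] using this

noncomputable def Iexp (m : ℤ) (ρ : ℂ) : ℂ := ∫ u in (0:ℝ)..1, E m u / (Z u - ρ)

lemma cont_f (m : ℤ) (ρ : ℂ) (hρ : ‖ρ‖ ≠ 1) :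
    Continuous (fun u : ℝ => E m u / (Z u - ρ)) := by
  apply Continuous.div
  · unfold E; fun_prop
  · unfold Z; fun_prop
  · exact fun u => Z_ne ρ hρ u

lemma Iexp_bound (m : ℤ) (ρ : ℂ) (hρ : ‖ρ‖ ≠ 1) :
    ‖Iexp m ρ‖ ≤ |1 - ‖ρ‖|⁻¹ := by
  have h0 : (0:ℝ) < |1 - ‖ρ‖| := by
    rw [abs_pos, sub_ne_zero]; exact fun h => hρ h.symm
  have := intervalIntegral.norm_integral_le_of_norm_le_const
    (C := |1 - ‖ρ‖|⁻¹) (f := fun u : ℝ => E m u / (Z u - ρ)) (a := 0) (b := 1) ?_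
  · simpa [Iexp] using this
  · intro u _
    rw [norm_div]
    rw [div_le_iff₀ (by exact lt_of_lt_of_le h0 (norm_den ρ u))]
    rw [abs_E]
    rw [inv_mul_eq_div, le_div_iff₀ h0, one_mul]
    exact norm_den ρ u

lemma int_E (m : ℤ) : (∫ u in (0:ℝ)..1, E m u) = if m = 0 then 1 else 0 := by
  rcases eq_or_ne m 0 with h|h
  · simp [E, h]
  · have hm : ((m:ℂ)) ≠ 0 := Int.cast_ne_zero.mpr h
    have hc : (-2*(π:ℂ)*Complex.I*m) ≠ 0 :=
      mul_ne_zero (mul_ne_zero (mul_ne_zero (by norm_num) (Complex.ofReal_ne_zero.mpr Real.pi_ne_zero)) Complex.I_ne_zero) hm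
    have := integral_exp_mul_complex (a := (0:ℝ)) (b := 1) hc
    simp only [E]
    rw [show (fun u:ℝ => Complex.exp (-2*(π:ℂ)*Complex.I*m*u)) = (fun u:ℝ => Complex.exp ((-2*(π:ℂ)*Complex.I*m)*u)) from rfl, this]
    have h1 : (-2*(π:ℂ)*Complex.I*m) * (1:ℝ) = (-m : ℤ) * (2*π*Complex.I) := by push_cast; ring
    rw [h1, Complex.exp_int_mul_two_pi_mul_I]
    simp [h]

lemma E_succ (m : ℤ) (u : ℝ) : E m u = E (m-1) u * Z u := by
  rw [E, E, Z, ← Complex.exp_add]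
  congr 1
  push_cast
  ring

lemma cont_E (m : ℤ) : Continuous (E m) := by unfold E; fun_prop

lemma Iexp_rec (m : ℤ) (ρ : ℂ) (hρ : ‖ρ‖ ≠ 1) :
    Iexp m ρ = (if m = 1 then 1 else 0) + ρ * Iexp (m-1) ρ := by
  have hpt : ∀ u : ℝ, E m u / (Z u - ρ) = E (m-1) u + ρ * (E (m-1) u / (Z u - ρ)) := by
    intro u
    rw [E_succ m u]
    field_simp [Z_ne ρ hρ u]
    ring
  rw [Iexp]
  simp_rw [hpt]
  rw [intervalIntegral.integral_add ((cont_E (m-1)).intervalIntegrable 0 1)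
      (((cont_f (m-1) ρ hρ).intervalIntegrable 0 1).const_mul ρ)]
  rw [intervalIntegral.integral_const_mul, int_E, Iexp]
  congr 1
  by_cases h : m = 1 <;> simp [h, sub_eq_zero, show m - 1 = 0 ↔ m = 1 by omega]

lemma Iexp_lt (ρ : ℂ) (h0 : ρ ≠ 0) (h1 : ‖ρ‖ < 1) (m : ℤ) :
    Iexp m ρ = if 1 ≤ m then ρ ^ (m - 1) else 0 := by
  have hρ : ‖ρ‖ ≠ 1 := ne_of_lt h1
  have hzero : ∀ m : ℤ, m ≤ 0 → Iexp m ρ = 0 := by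
    have aux : ∀ (k : ℕ) (m : ℤ), m ≤ 0 → Iexp m ρ = ρ ^ k * Iexp (m - k) ρ := by
      intro k
      induction k with
      | zero => intro m _; simp
      | succ k ih =>
        intro m hm
        rw [Iexp_rec m ρ hρ, if_neg (by omega), ih (m-1) (by omega)]
        rw [show m - 1 - (k:ℤ) = m - ((k:ℕ)+1:ℕ) by push_cast; ring]
        ring
    intro m hm
    have hb : ∀ k : ℕ, ‖Iexp m ρ‖ ≤ (‖ρ‖)^k * |1 - ‖ρ‖|⁻¹ := by
      intro k
      rw [aux k m hm, norm_mul, norm_pow]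
      exact mul_le_mul_of_nonneg_left (Iexp_bound _ ρ hρ) (by positivity)
    have hlim : Filter.Tendsto (fun k : ℕ => (‖ρ‖)^k * |1 - ‖ρ‖|⁻¹)
        Filter.atTop (nhds 0) := by
      rw [show (0:ℝ) = 0 * |1 - ‖ρ‖|⁻¹ by ring]
      exact (tendsto_pow_atTop_nhds_zero_of_lt_one (norm_nonneg ρ) h1).mul_const _
    have := ge_of_tendsto' hlim hb
    simpa using le_antisymm this (norm_nonneg _)
  have hpos : ∀ m : ℤ, 1 ≤ m → Iexp m ρ = ρ ^ (m - 1) := by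
    refine Int.le_induction ?_ ?_
    · rw [Iexp_rec 1 ρ hρ, if_pos rfl, show (1:ℤ)-1 = 0 from rfl, hzero 0 le_rfl]; simp
    · intro m hm1 ih
      rw [Iexp_rec (m+1) ρ hρ, if_neg (by omega), show m + 1 - 1 = m by ring, ih]
      have hz : ρ^m = ρ^(m-1) * ρ := by rw [← zpow_add_one₀ h0]; congr 1; ring
      rw [hz]; ring
  rcases le_or_gt 1 m with hm | hm
  · rw [if_pos hm]; exact hpos m hm
  · rw [if_neg (by omega)]
    exact hzero m (by omega)

lemma Iexp_gt (ρ : ℂ) (h1 : 1 < ‖ρ‖) (m : ℤ) :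
    Iexp m ρ = if m ≤ 0 then -ρ ^ (m - 1) else 0 := by
  have hρ : ‖ρ‖ ≠ 1 := ne_of_gt h1
  have h0 : ρ ≠ 0 := by
    intro h; rw [h] at h1; simp at h1; linarith
  have hinv : ∀ m : ℤ, Iexp m ρ = ρ⁻¹ * (Iexp (m+1) ρ - if m = 0 then 1 else 0) := by
    intro m
    rw [Iexp_rec (m+1) ρ hρ, show m + 1 - 1 = m by ring]
    rw [if_congr (show m + 1 = 1 ↔ m = 0 by omega) rfl rfl]
    field_simp
    ring
  have hzero : ∀ m : ℤ, 1 ≤ m → Iexp m ρ = 0 := by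
    have aux : ∀ (k : ℕ) (m : ℤ), 1 ≤ m → Iexp m ρ = (ρ⁻¹) ^ k * Iexp (m + k) ρ := by
      intro k
      induction k with
      | zero => intro m _; simp
      | succ k ih =>
        intro m hm
        rw [hinv m, if_neg (by omega), ih (m+1) (by omega)]
        rw [show m + 1 + (k:ℤ) = m + ((k:ℕ)+1:ℕ) by push_cast; ring]
        ring
    intro m hm
    have habsinv : ‖ρ⁻¹‖ < 1 := by
      rw [norm_inv, inv_lt_one_iff₀]
      right; exact h1
    have hb : ∀ k : ℕ, ‖Iexp m ρ‖ ≤ (‖ρ⁻¹‖)^k * |1 - ‖ρ‖|⁻¹ := by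
      intro k
      rw [aux k m hm, norm_mul, norm_pow]
      exact mul_le_mul_of_nonneg_left (Iexp_bound _ ρ hρ) (by positivity)
    have hlim : Filter.Tendsto (fun k : ℕ => (‖ρ⁻¹‖)^k * |1 - ‖ρ‖|⁻¹)
        Filter.atTop (nhds 0) := by
      rw [show (0:ℝ) = 0 * |1 - ‖ρ‖|⁻¹ by ring]
      exact (tendsto_pow_atTop_nhds_zero_of_lt_one (norm_nonneg _) habsinv).mul_const _
    have := ge_of_tendsto' hlim hb
    simpa using le_antisymm this (norm_nonneg _)
  have hneg : ∀ n : ℕ, Iexp (-(n:ℤ)) ρ = -ρ ^ (-(n:ℤ) - 1) := by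
    intro n
    induction n with
    | zero =>
      rw [show -((0:ℕ):ℤ) = 0 by simp, hinv 0, if_pos rfl, show (0:ℤ)+1 = 1 by ring,
        hzero 1 le_rfl]
      simp [zpow_neg]
    | succ n ih =>
      rw [show -(((n:ℕ)+1:ℕ):ℤ) = -(n:ℤ) - 1 by push_cast; ring, hinv, if_neg (by omega),
        show -(n:ℤ) - 1 + 1 = -(n:ℤ) by ring, ih]
      rw [zpow_sub_one₀ h0 (-(n:ℤ) - 1)]
      ring
  rcases le_or_gt m 0 with hm | hm
  · rw [if_pos hm, show m = -(((-m).toNat : ℕ):ℤ) by omega]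
    exact hneg (-m).toNat
  · rw [if_neg (by omega)]
    exact hzero m hm

lemma integral_double_sum {n : ℕ} (t : Finset ℂ) (g : Fin n → ℂ → ℂ) (mf : Fin n → ℤ)
    (hab : ∀ x ∈ t, ‖x‖ ≠ 1) :
    (∫ u in (0:ℝ)..1, ∑ l : Fin n, ∑ x ∈ t, g l x * (E (mf l) u / (Z u - x)))
    = ∑ l : Fin n, ∑ x ∈ t, g l x * Iexp (mf l) x := by
  rw [intervalIntegral.integral_finset_sum
    (f := fun l (u : ℝ) => ∑ x ∈ t, g l x * (E (mf l) u / (Z u - x)))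
    (fun l _ =>
    ((continuous_finset_sum t (fun x hx =>
      (continuous_const.mul (cont_f (mf l) x (hab x hx))))).intervalIntegrable 0 1))]
  refine Finset.sum_congr rfl fun l _ => ?_
  rw [intervalIntegral.integral_finset_sum
    (f := fun x (u : ℝ) => g l x * (E (mf l) u / (Z u - x)))
    (fun x hx =>
    ((continuous_const.mul (cont_f (mf l) x (hab x hx))).intervalIntegrable 0 1))]
  exact Finset.sum_congr rfl fun x _ => intervalIntegral.integral_const_mul _ _

lemma deriv_eval (s : Finset ℂ) (c : ℂ)
    (P : Polynomial ℂ) (hP : P = Polynomial.C c * ∏ x ∈ s, (Polynomial.X - Polynomial.C x))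
    (x : ℂ) (hx : x ∈ s) :
    P.derivative.eval x = c * ∏ y ∈ s.erase x, (x - y) := by
  rw [hP, derivative_C_mul, eval_mul, eval_C]
  congr 1
  have h1 : (∏ x ∈ s, (Polynomial.X - Polynomial.C x))
      = (Multiset.map (fun a => Polynomial.X - Polynomial.C a) s.val).prod := rfl
  rw [h1, eval_multiset_prod_X_sub_C_derivative hx]
  rw [show ∏ y ∈ s.erase x, (x - y) = (Multiset.map (fun a => x - a) (s.erase x).val).prod from rfl,
    Finset.erase_val]

lemma pf_term (s : Finset ℂ) (c : ℂ) (hc : c ≠ 0)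
    (P : Polynomial ℂ) (hP : P = Polynomial.C c * ∏ x ∈ s, (Polynomial.X - Polynomial.C x))
    (z : ℂ) (hz : ∀ x ∈ s, z ≠ x) (x : ℂ) (hx : x ∈ s) :
    (P.derivative.eval x)⁻¹ * (z - x)⁻¹ = (P.eval z)⁻¹ * (Lagrange.basis s id x).eval z := by
  have hA : ∀ y ∈ s.erase x, x - y ≠ 0 := fun y hy =>
    sub_ne_zero.mpr (Finset.ne_of_mem_erase hy).symm
  have hB : ∀ y ∈ s.erase x, z - y ≠ 0 := fun y hy =>
    sub_ne_zero.mpr (hz y (Finset.mem_of_mem_erase hy))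
  have hzx : z - x ≠ 0 := sub_ne_zero.mpr (hz x hx)
  have hbasis : (Lagrange.basis s id x).eval z
      = (∏ y ∈ s.erase x, (x - y))⁻¹ * ∏ y ∈ s.erase x, (z - y) := by
    rw [Lagrange.basis, eval_prod, ← Finset.prod_inv_distrib, ← Finset.prod_mul_distrib]
    exact Finset.prod_congr rfl fun y _ => by
      simp [Lagrange.basisDivisor, eval_mul, eval_C, eval_sub, eval_X]
  have hPz : P.eval z = c * ((z - x) * ∏ y ∈ s.erase x, (z - y)) := by
    rw [hP, eval_mul, eval_C, eval_prod]
    simp only [eval_sub, eval_X, eval_C]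
    rw [← Finset.mul_prod_erase s _ hx]
  rw [deriv_eval s c P hP x hx, hbasis, hPz]
  have hA0 : (∏ y ∈ s.erase x, (x - y)) ≠ 0 := Finset.prod_ne_zero_iff.mpr hA
  have hB0 : (∏ y ∈ s.erase x, (z - y)) ≠ 0 := Finset.prod_ne_zero_iff.mpr hB
  field_simp

lemma pf_sum (s : Finset ℂ) (hs : s.Nonempty) (c : ℂ) (hc : c ≠ 0)
    (P : Polynomial ℂ) (hP : P = Polynomial.C c * ∏ x ∈ s, (Polynomial.X - Polynomial.C x))
    (z : ℂ) (hz : ∀ x ∈ s, z ≠ x) :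
    (P.eval z)⁻¹ = ∑ x ∈ s, (P.derivative.eval x)⁻¹ * (z - x)⁻¹ := by
  have := Lagrange.sum_basis (Function.injective_id.injOn) hs
  calc (P.eval z)⁻¹ = (P.eval z)⁻¹ * (∑ x ∈ s, Lagrange.basis s id x).eval z := by
        rw [this]; simp
    _ = ∑ x ∈ s, (P.eval z)⁻¹ * (Lagrange.basis s id x).eval z := by
        rw [eval_finset_sum, Finset.mul_sum]
    _ = ∑ x ∈ s, (P.derivative.eval x)⁻¹ * (z - x)⁻¹ :=
        Finset.sum_congr rfl fun x hx => (pf_term s c hc P hP z hz x hx).symm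

lemma deriv_rel (p : ℕ) (hp : 1 ≤ p) (P : Polynomial ℂ)
    (hself : ∀ z : ℂ, z ≠ 0 → P.eval z = z ^ (2*p) * P.eval z⁻¹)
    (r : ℂ) (hr0 : r ≠ 0) (hroot : P.eval r⁻¹ = 0) :
    P.derivative.eval r⁻¹ = -(r ^ (2*p-2))⁻¹ * P.derivative.eval r := by
  have h1 : HasDerivAt (fun z : ℂ => P.eval z) (P.derivative.eval r) r := P.hasDerivAt r
  have hinv : HasDerivAt (fun z : ℂ => z⁻¹) (-(r^2)⁻¹) r := hasDerivAt_inv hr0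
  have hPinv : HasDerivAt (fun z : ℂ => P.eval z⁻¹)
      (P.derivative.eval r⁻¹ * (-(r^2)⁻¹)) r := (P.hasDerivAt r⁻¹).comp r hinv
  have hpow : HasDerivAt (fun z : ℂ => z^(2*p)) ((2*p : ℕ) * r^(2*p-1)) r := hasDerivAt_pow (2*p) r
  have hg : HasDerivAt (fun z : ℂ => z^(2*p) * P.eval z⁻¹)
      ((2*p : ℕ) * r^(2*p-1) * P.eval r⁻¹ + r^(2*p) * (P.derivative.eval r⁻¹ * (-(r^2)⁻¹))) r :=
    hpow.mul hPinv
  have hev : (fun z : ℂ => P.eval z) =ᶠ[nhds r] (fun z : ℂ => z^(2*p) * P.eval z⁻¹) := by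
    filter_upwards [isOpen_compl_singleton.mem_nhds (fun h => hr0 h : r ∈ ({0}ᶜ : Set ℂ))] with z hz
    exact hself z hz
  have hg' : HasDerivAt (fun z : ℂ => P.eval z)
      ((2*p : ℕ) * r^(2*p-1) * P.eval r⁻¹ + r^(2*p) * (P.derivative.eval r⁻¹ * (-(r^2)⁻¹))) r :=
    HasDerivAt.congr_of_eventuallyEq hg hev
  have heq := h1.unique hg'
  rw [hroot] at heq
  have h2 : r^(2*p) = r^(2*p-2) * r^2 := by rw [← pow_add]; congr 1; omega
  rw [h2] at heq
  have hr2 : (r:ℂ)^2 ≠ 0 := pow_ne_zero _ hr0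
  have hrp : (r:ℂ)^(2*p-2) ≠ 0 := pow_ne_zero _ hr0
  have key : P.derivative.eval r = -(r^(2*p-2)) * P.derivative.eval r⁻¹ := by
    rw [heq]
    field_simp
    ring
  rw [key]
  field_simp

set_option maxHeartbeats 2000000 in
open Finset Polynomial in
theorem stmt8 (p : ℕ) (hp : 1 ≤ p) (P : Polynomial ℂ)
    (hdeg : P.natDegree = 2 * p)
    (hself : ∀ z : ℂ, z ≠ 0 → P.eval z = z ^ (2 * p) * P.eval z⁻¹)
    (r : Fin p → ℂ)
    (hr : ∀ j, 0 < ‖r j‖ ∧ ‖r j‖ < 1)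
    (hroots : P.roots =
      Multiset.map r Finset.univ.val + Multiset.map (fun j => (r j)⁻¹) Finset.univ.val)
    (hsimple : (Multiset.map r Finset.univ.val +
      Multiset.map (fun j => (r j)⁻¹) Finset.univ.val).Nodup)
    (d : ℤ) (α : Fin (2 * p + 1) → ℂ) :
    (∫ u in (0:ℝ)..1,
        (∑ l : Fin (2 * p + 1),
            α l * Complex.exp (-2 * (Real.pi : ℂ) * Complex.I * ((d : ℂ) + ((l : ℕ) : ℂ)) * (u : ℂ))) /
          P.eval (Complex.exp (-2 * (Real.pi : ℂ) * Complex.I * (u : ℂ)))) =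
      ∑ j : Fin p, ∑ l : Fin (2 * p + 1),
        α l / P.derivative.eval (r j) *
          r j ^ (|d + ((l : ℕ) : ℤ) - 1| +
            (2 * (p : ℤ) - 2) * (if d + ((l : ℕ) : ℤ) ≤ 0 then 1 else 0)) := by
  classical
  -- basic setup
  have hr0 : ∀ j, r j ≠ 0 := fun j => by
    intro h; have := (hr j).1; rw [h] at this; simp at this
  set s : Finset ℂ := ⟨_, hsimple⟩ with hs_def
  have hsv : s.val = P.roots := hroots.symm
  have hP0 : P ≠ 0 := fun h => by rw [h] at hdeg; simp at hdeg; omega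
  have hc : P.leadingCoeff ≠ 0 := Polynomial.leadingCoeff_ne_zero.mpr hP0
  have hcard : Multiset.card P.roots = P.natDegree := by
    rw [hroots, hdeg]; simp [two_mul]
  have hPfact : P = Polynomial.C P.leadingCoeff * ∏ x ∈ s, (Polynomial.X - Polynomial.C x) := by
    conv_lhs => rw [← Polynomial.C_leadingCoeff_mul_prod_multiset_X_sub_C hcard]
    congr 1
    rw [show (∏ x ∈ s, (Polynomial.X - Polynomial.C x))
      = (Multiset.map (fun a => Polynomial.X - Polynomial.C a) s.val).prod from rfl, hsv]
  have hmem : ∀ x ∈ s, (∃ j, x = r j) ∨ (∃ j, x = (r j)⁻¹) := by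
    intro x hx
    have : x ∈ Multiset.map r Finset.univ.val + Multiset.map (fun j => (r j)⁻¹) Finset.univ.val := hx
    rw [Multiset.mem_add] at this
    rcases this with h | h <;> rw [Multiset.mem_map] at h <;>
      obtain ⟨j, _, hj⟩ := h
    · exact Or.inl ⟨j, hj.symm⟩
    · exact Or.inr ⟨j, hj.symm⟩
  have habs : ∀ x ∈ s, ‖x‖ ≠ 1 := by
    intro x hx
    rcases hmem x hx with ⟨j, rfl⟩ | ⟨j, rfl⟩
    · exact ne_of_lt (hr j).2
    · rw [norm_inv]
      intro h
      rw [inv_eq_one] at h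
      exact (ne_of_lt (hr j).2) h
  have hzs : ∀ u : ℝ, ∀ x ∈ s, Z u ≠ x := by
    intro u x hx h
    exact habs x hx (by rw [← h, abs_Z])
  have snon : s.Nonempty := by
    rw [← Finset.card_pos, Finset.card_def, hsv, hcard, hdeg]; omega
  have hder_ne : ∀ x ∈ s, P.derivative.eval x ≠ 0 := by
    intro x hx
    rw [deriv_eval s P.leadingCoeff P hPfact x hx]
    refine mul_ne_zero hc (Finset.prod_ne_zero_iff.mpr fun y hy =>
      sub_ne_zero.mpr (Finset.ne_of_mem_erase hy).symm)
  have hrmem : ∀ j, r j ∈ s := by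
    intro j
    rw [← Finset.mem_val, hsv, hroots]
    exact Multiset.mem_add.mpr (Or.inl (Multiset.mem_map.mpr ⟨j, Finset.mem_univ_val j, rfl⟩))
  have hrinvmem : ∀ j, (r j)⁻¹ ∈ s := by
    intro j
    show (r j)⁻¹ ∈ Multiset.map r Finset.univ.val + Multiset.map (fun j => (r j)⁻¹) Finset.univ.val
    exact Multiset.mem_add.mpr (Or.inr (Multiset.mem_map.mpr ⟨j, Finset.mem_univ_val j, rfl⟩))
  have hrootinv : ∀ j, P.eval ((r j)⁻¹) = 0 := by
    intro j
    have : (r j)⁻¹ ∈ P.roots := by rw [← hsv]; exact hrinvmem j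
    exact (Polynomial.isRoot_of_mem_roots this)
  -- step 1: pointwise rewrite of the integrand
  have key : (∫ u in (0:ℝ)..1,
        (∑ l : Fin (2 * p + 1),
            α l * Complex.exp (-2 * (Real.pi : ℂ) * Complex.I * ((d : ℂ) + ((l : ℕ) : ℂ)) * (u : ℂ))) /
          P.eval (Complex.exp (-2 * (Real.pi : ℂ) * Complex.I * (u : ℂ))))
      = ∫ u in (0:ℝ)..1, ∑ l : Fin (2 * p + 1), ∑ x ∈ s,
          (α l * (P.derivative.eval x)⁻¹) * (E (d + (l:ℕ)) u / (Z u - x)) := by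
    apply intervalIntegral.integral_congr
    intro u _
    simp only
    rw [show Complex.exp (-2 * (Real.pi : ℂ) * Complex.I * (u:ℂ)) = Z u from rfl]
    rw [div_eq_mul_inv, pf_sum s snon P.leadingCoeff hc P hPfact (Z u) (hzs u),
      Finset.sum_mul_sum]
    refine Finset.sum_congr rfl fun l _ => Finset.sum_congr rfl fun x _ => ?_
    rw [show Complex.exp (-2 * (Real.pi : ℂ) * Complex.I * ((d : ℂ) + ((l:ℕ) : ℂ)) * (u:ℂ))
      = E (d + (l:ℕ)) u by rw [E]; push_cast; ring_nf]
    rw [div_eq_mul_inv]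
    ring
  rw [key]
  -- step 2: interchange integral and finite sums
  have key2 := integral_double_sum s (fun l x => α l * (P.derivative.eval x)⁻¹)
    (fun l => d + (l:ℕ)) habs
  rw [key2]
  -- step 3: split the sum over s into the two root families
  have step3 : ∀ l : Fin (2*p+1),
      (∑ x ∈ s, (α l * (P.derivative.eval x)⁻¹) * Iexp (d + (l:ℕ)) x)
      = ∑ j : Fin p, ((α l * (P.derivative.eval (r j))⁻¹) * Iexp (d + (l:ℕ)) (r j)
          + (α l * (P.derivative.eval ((r j)⁻¹))⁻¹) * Iexp (d + (l:ℕ)) ((r j)⁻¹)) := by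
    intro l
    rw [Finset.sum_eq_multiset_sum, show s.val = _ + _ from rfl, Multiset.map_add, Multiset.sum_add,
      Multiset.map_map, Multiset.map_map, Finset.sum_add_distrib]
    rfl
  simp_rw [step3]
  rw [Finset.sum_comm]
  refine Finset.sum_congr rfl fun j _ => Finset.sum_congr rfl fun l _ => ?_
  -- step 4: per-term evaluation
  set m : ℤ := d + (l:ℕ) with hm_def
  have habsj := hr j
  have hj0 := hr0 j
  have habsinv : 1 < ‖(r j)⁻¹‖ := by
    rw [norm_inv]
    rw [lt_inv_comm₀ (by norm_num) habsj.1]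
    simpa using habsj.2
  rw [Iexp_lt (r j) hj0 habsj.2 m, Iexp_gt ((r j)⁻¹) habsinv m]
  have hdrel := deriv_rel p hp P hself (r j) hj0 (hrootinv j)
  rw [hdrel]
  have hrp : (r j)^(2*p-2) ≠ 0 := pow_ne_zero _ hj0
  have hd' : P.derivative.eval (r j) ≠ 0 := hder_ne (r j) (hrmem j)
  by_cases hm : m ≤ 0
  · rw [if_neg (by omega), if_pos hm, if_pos hm]
    have hexp : (r j) ^ (|m - 1| + (2 * (p:ℤ) - 2) * 1)
        = (r j)^(2*p-2) * ((r j)⁻¹)^(m-1) := by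
      rw [inv_zpow, ← zpow_neg, ← zpow_natCast (r j) (2*p-2), ← zpow_add₀ hj0]
      congr 1
      have h22 : ((2*p-2 : ℕ) : ℤ) = 2*(p:ℤ) - 2 := by
        push_cast [Nat.cast_sub (by omega : 2 ≤ 2*p)]; ring
      rw [h22, abs_of_nonpos (show m - 1 ≤ 0 by omega)]
      ring
    rw [hexp, div_eq_mul_inv, mul_inv, inv_neg, inv_inv]
    field_simp
    ring
  · rw [if_pos (by omega), if_neg hm, if_neg hm]
    rw [abs_of_nonneg (by omega : (0:ℤ) ≤ m - 1)]
    rw [div_eq_mul_inv]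
    ring
end
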